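/- arXiv:1304.7936 — 11 statements merged into one kernel-verified Lean document; each statement's English description precedes it below -/
import Mathlib

section
/- Let μ be a finite Borel measure on the unit interval [0,1]. Then the function f : [0,∞) → [0,∞) defined by f(x) = ∫_{[0,1]} (1 !_t x) dμ(t) is operator monotone: for every n ∈ ℕ and all n×n positive semidefinite complex matrices A, B with A ≤ B in the Loewner order, f(A) ≤ f(B), where f(A) is obtained by applying f to A via the continuous functional calculus. -/
open MeasureTheory Real ComplexOrder

set_option maxHeartbeats 1000000
set_option synthInstance.maxHeartbeats 1000000

/-- The `t`-weighted harmonic mean `1 !_t x` of `1` and `x`, for `t ∈ [0,1]`, `x ∈ [0,∞)`. -/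
noncomputable def whm (t x : ℝ) : ℝ :=
  if t = 0 ∧ x = 0 then 1 else x / ((1 - t) * x + t)

section Abstract
variable {𝔸 : Type*} [CStarAlgebra 𝔸] [PartialOrder 𝔸] [StarOrderedRing 𝔸]

lemma smul_nonneg'' {c : ℝ} (hc : 0 ≤ c) {z : 𝔸} (hz : 0 ≤ z) : 0 ≤ c • z := by
  have h1 : c • z = star ((Real.sqrt c) • (1 : 𝔸)) * z * ((Real.sqrt c) • (1 : 𝔸)) := by
    simp [smul_mul_assoc, mul_smul_comm, smul_smul, Real.mul_self_sqrt hc]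
  rw [h1]
  exact star_left_conjugate_nonneg hz _

lemma cfc_whm_mono (t : ℝ) (ht0 : 0 ≤ t) (ht1 : t ≤ 1) {a b : 𝔸}
    (ha : 0 ≤ a) (hab : a ≤ b) : cfc (whm t) a ≤ cfc (whm t) b := by
  have hb : 0 ≤ b := ha.trans hab
  rcases eq_or_lt_of_le ht0 with rfl | ht0'
  · have h1 : whm 0 = fun _ : ℝ => (1 : ℝ) := by
      funext x
      by_cases hx : x = 0 <;> simp [whm, hx]
    rw [h1, cfc_const 1 a, cfc_const 1 b]
  rcases eq_or_lt_of_le ht1 with rfl | ht1'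
  · have h1 : whm 1 = fun x : ℝ => x := by
      funext x; simp [whm]
    rw [h1, cfc_id' ℝ a, cfc_id' ℝ b]
    exact hab
  -- now 0 < t < 1
  have h1t : (0:ℝ) < 1 - t := by linarith
  have hspec : ∀ x ∈ spectrum ℝ a, 0 ≤ x := fun x hx => spectrum_nonneg_of_nonneg ha hx
  have hspecb : ∀ x ∈ spectrum ℝ b, 0 ≤ x := fun x hx => spectrum_nonneg_of_nonneg hb hx
  have hden : ∀ x : ℝ, 0 ≤ x → 0 < (1 - t) * x + t := fun x hx =>
    add_pos_of_nonneg_of_pos (mul_nonneg h1t.le hx) ht0'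
  -- rewrite whm as a difference
  have key : ∀ (c : 𝔸), 0 ≤ c → (hc : IsUnit ((1 - t) • c + t • (1:𝔸))) →
      cfc (whm t) c = (1 - t)⁻¹ • (1 : 𝔸) - (t * (1 - t)⁻¹) • (hc.unit⁻¹ : 𝔸ˣ) := by
    intro c hc hu
    have hspc : ∀ x ∈ spectrum ℝ c, 0 ≤ x := fun x hx => spectrum_nonneg_of_nonneg hc hx
    have hcsa : IsSelfAdjoint c := .of_nonneg hc
    have hgcont : ContinuousOn (fun x : ℝ => ((1 - t) * x + t)⁻¹) (spectrum ℝ c) := by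
      apply ContinuousOn.inv₀
      · fun_prop
      · exact fun x hx => (hden x (hspc x hx)).ne'
    have hcongr : cfc (whm t) c =
        cfc (fun x : ℝ => (1 - t)⁻¹ - (t * (1 - t)⁻¹) * ((1 - t) * x + t)⁻¹) c := by
      apply cfc_congr
      intro x hx
      have hd := hden x (hspc x hx)
      simp only [whm, ht0'.ne', false_and, if_false]
      have h1t' : (1 - t) ≠ 0 := h1t.ne'
      have hd' := hd.ne'
      rw [div_eq_iff hd', sub_mul, mul_assoc, inv_mul_cancel₀ hd', mul_one, mul_add, ← mul_assoc,
        inv_mul_cancel₀ h1t', one_mul]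
      ring
    rw [hcongr, cfc_sub _ _ c (by fun_prop) (by fun_prop)]
    rw [cfc_const _ c hcsa, cfc_const_mul _ _ c hgcont]
    have hmc : cfc (fun x : ℝ => (1 - t) * x + t) c = (1 - t) • c + t • (1 : 𝔸) := by
      rw [cfc_add c (fun x => (1 - t) * x) (fun _ => t) (by fun_prop) (by fun_prop),
        cfc_const_mul_id _ c hcsa, cfc_const _ c hcsa, Algebra.algebraMap_eq_smul_one]
    have hinv : cfc (fun x : ℝ => ((1 - t) * x + t)⁻¹) c = (hu.unit⁻¹ : 𝔸ˣ) := by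
      have := cfc_inv (a := c) (f := fun x : ℝ => (1 - t) * x + t)
        (fun x hx => (hden x (hspc x hx)).ne') (by fun_prop) hcsa
      rw [hmc, ← hu.unit_spec, Ring.inverse_unit] at this
      exact this
    rw [hinv, Algebra.algebraMap_eq_smul_one]
  -- units
  have honeunit : IsUnit (t • (1 : 𝔸)) := by
    rw [← Algebra.algebraMap_eq_smul_one]
    exact (isUnit_iff_ne_zero.2 ht0'.ne').map (algebraMap ℝ 𝔸)
  have hone_nonneg : (0:𝔸) ≤ t • 1 := smul_nonneg'' ht0 zero_le_one
  have hma : IsUnit ((1 - t) • a + t • (1:𝔸)) :=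
    CStarAlgebra.isUnit_of_le _ (le_add_of_nonneg_left (smul_nonneg'' h1t.le ha)) ⟨hone_nonneg, honeunit⟩
  have hmb : IsUnit ((1 - t) • b + t • (1:𝔸)) :=
    CStarAlgebra.isUnit_of_le _ (le_add_of_nonneg_left (smul_nonneg'' h1t.le hb)) ⟨hone_nonneg, honeunit⟩
  have hmam : ((1 - t) • a + t • (1:𝔸)) ≤ ((1 - t) • b + t • (1:𝔸)) := by
    apply add_le_add_left
    have h0 : (0:𝔸) ≤ (1 - t) • (b - a) := smul_nonneg'' h1t.le (sub_nonneg.2 hab)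
    rw [smul_sub] at h0
    exact sub_nonneg.1 h0
  have hmanneg : (0:𝔸) ≤ ((1 - t) • a + t • (1:𝔸)) :=
    add_nonneg (smul_nonneg'' h1t.le ha) hone_nonneg
  have hinvle : (hmb.unit⁻¹ : 𝔸ˣ) ≤ ((hma.unit⁻¹ : 𝔸ˣ) : 𝔸) := by
    apply CStarAlgebra.inv_le_inv (a := hma.unit) (b := hmb.unit)
    · rw [hma.unit_spec]; exact hmanneg
    · rw [hma.unit_spec, hmb.unit_spec]; exact hmam
  rw [key a ha hma, key b hb hmb]
  apply sub_le_sub_left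
  have hc2 : (0:ℝ) ≤ t * (1 - t)⁻¹ := mul_nonneg ht0 (inv_nonneg.2 h1t.le)
  have h0 := smul_nonneg'' hc2 (sub_nonneg.2 hinvle)
  rw [smul_sub] at h0
  exact sub_nonneg.1 h0

end Abstract

section Bridge
variable {n : ℕ}

noncomputable abbrev φn (n : ℕ) :=
  Matrix.toEuclideanCLM (𝕜 := ℂ) (n := Fin n)

lemma posSemidef_iff_nonneg (M : Matrix (Fin n) (Fin n) ℂ) :
    M.PosSemidef ↔ 0 ≤ φn n M := by
  constructor
  · intro h
    obtain ⟨B, rfl⟩ : ∃ B : Matrix (Fin n) (Fin n) ℂ, M = B.conjTranspose * B := by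
      open scoped MatrixOrder in
      obtain ⟨X, hX, -, rfl⟩ := CFC.exists_sqrt_of_isSelfAdjoint_of_quasispectrumRestricts
        h.isHermitian (QuasispectrumRestricts.nnreal_of_nonneg h.nonneg)
      exact ⟨X, by rw [← Matrix.star_eq_conjTranspose, hX.star_eq]⟩
    rw [← Matrix.star_eq_conjTranspose, map_mul, map_star]
    exact star_mul_self_nonneg _
  · intro h
    set s := cfc Real.sqrt (φn n M) with hsdef
    have hsa : IsSelfAdjoint s := cfc_predicate _ _
    have hs : s * s = φn n M := by
      rw [hsdef, ← cfc_mul _ _ (φn n M) (by fun_prop) (by fun_prop)]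
      have : (spectrum ℝ (φn n M)).EqOn (fun x => Real.sqrt x * Real.sqrt x) id := by
        intro x hx
        exact Real.mul_self_sqrt (spectrum_nonneg_of_nonneg h hx)
      rw [cfc_congr this, cfc_id ℝ (φn n M) (.of_nonneg h)]
    set C := (φn n).symm s with hC
    have hM : M = star C * C := by
      have h1 : φn n M = star s * s := by rw [hsa.star_eq, hs]
      have h2 : M = (φn n).symm (star s * s) := by
        rw [← h1, StarAlgEquiv.symm_apply_apply]
      rw [h2, map_mul, map_star]
    rw [hM, Matrix.star_eq_conjTranspose]
    exact Matrix.posSemidef_conjTranspose_mul_self C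
end Bridge

lemma continuous_phin (n : ℕ) : Continuous (φn n) := by
  have : ⇑(φn n) = ⇑((φn n).toAlgEquiv.toLinearMap) := rfl
  rw [this]
  exact LinearMap.continuous_of_finiteDimensional _

lemma mono_whm {n : ℕ} (t : ℝ) (ht0 : 0 ≤ t) (ht1 : t ≤ 1)
    {A B : Matrix (Fin n) (Fin n) ℂ} (hA : A.PosSemidef) (hB : B.PosSemidef)
    (hAB : (B - A).PosSemidef) :
    (cfc (whm t) B - cfc (whm t) A).PosSemidef := by
  have hAsa : IsSelfAdjoint A := hA.1.isSelfAdjoint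
  have hBsa : IsSelfAdjoint B := hB.1.isSelfAdjoint
  have hφA : IsSelfAdjoint (φn n A) := hAsa.map (φn n)
  have hφB : IsSelfAdjoint (φn n B) := hBsa.map (φn n)
  have hmapA : φn n (cfc (whm t) A) = cfc (whm t) (φn n A) :=
    StarAlgHomClass.map_cfc (S := ℂ) (φn n) (whm t) A
      (Matrix.finite_real_spectrum.continuousOn _) (continuous_phin n) hAsa hφA
  have hmapB : φn n (cfc (whm t) B) = cfc (whm t) (φn n B) :=
    StarAlgHomClass.map_cfc (S := ℂ) (φn n) (whm t) B
      (Matrix.finite_real_spectrum.continuousOn _) (continuous_phin n) hBsa hφB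
  rw [posSemidef_iff_nonneg, map_sub, hmapA, hmapB, sub_nonneg]
  have ha : 0 ≤ φn n A := (posSemidef_iff_nonneg A).1 hA
  have hab : φn n A ≤ φn n B := by
    have := (posSemidef_iff_nonneg _).1 hAB
    rw [map_sub] at this
    exact sub_nonneg.1 this
  exact cfc_whm_mono t ht0 ht1 ha hab

section WhmBasic
variable {t x : ℝ}

lemma whm_nonneg (ht0 : 0 ≤ t) (ht1 : t ≤ 1) (hx : 0 ≤ x) : 0 ≤ whm t x := by
  unfold whm
  split_ifs with h
  · norm_num
  · exact div_nonneg hx (by nlinarith)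

lemma whm_le_max (ht0 : 0 ≤ t) (ht1 : t ≤ 1) (hx : 0 ≤ x) : whm t x ≤ max 1 x := by
  unfold whm
  split_ifs with h
  · exact le_max_left _ _
  · rcases le_total x 1 with hx1 | hx1
    · refine le_trans ?_ (le_max_left _ _)
      have hd : 0 < (1 - t) * x + t := by
        rcases eq_or_lt_of_le ht0 with rfl | ht0'
        · have hx0 : x ≠ 0 := fun h0 => h (⟨rfl, h0⟩)
          have : 0 < x := lt_of_le_of_ne hx (Ne.symm hx0)
          nlinarith
        · nlinarith
      rw [div_le_one hd]
      nlinarith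
    · refine le_trans ?_ (le_max_right _ _)
      have hd : 1 ≤ (1 - t) * x + t := by nlinarith
      calc x / ((1 - t) * x + t) ≤ x / 1 := by
            apply div_le_div_of_nonneg_left hx ?_ hd
            · norm_num
        _ = x := div_one x
  
lemma measurable_whm (x : ℝ) : Measurable fun t : ℝ => whm t x := by
  unfold whm
  apply Measurable.ite
  · by_cases hx : x = 0
    · simp only [hx, and_true]
      simpa [Set.setOf_eq_eq_singleton] using (MeasurableSet.singleton (0:ℝ))
    · simp [hx]
  · exact measurable_const
  · exact Measurable.div measurable_const (by fun_prop)

end WhmBasic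

lemma integrable_whm_comb (μ : Measure (Set.Icc (0 : ℝ) 1)) [IsFiniteMeasure μ]
    {m : ℕ} (lam w : Fin m → ℝ) (hlam : ∀ i, 0 ≤ lam i) (hw : ∀ i, 0 ≤ w i) (i : Fin m) :
    Integrable (fun t : Set.Icc (0:ℝ) 1 => whm (↑t) (lam i) * w i) μ := by
  apply Integrable.mono' (g := fun _ => max 1 (lam i) * w i) (integrable_const _)
  · exact (((measurable_whm (lam i)).comp measurable_subtype_coe).mul_const _).aestronglyMeasurable
  · refine Filter.Eventually.of_forall fun t => ?_
    rw [Real.norm_eq_abs, abs_mul, abs_of_nonneg (whm_nonneg t.2.1 t.2.2 (hlam i)),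
      abs_of_nonneg (hw i)]
    exact mul_le_mul_of_nonneg_right (whm_le_max t.2.1 t.2.2 (hlam i)) (hw i)

lemma sum_integral_eq (μ : Measure (Set.Icc (0 : ℝ) 1)) [IsFiniteMeasure μ] (f : ℝ → ℝ)
    (hf : ∀ x : ℝ, 0 ≤ x → f x = ∫ t : Set.Icc (0 : ℝ) 1, whm (t : ℝ) x ∂μ)
    {m : ℕ} (lam w : Fin m → ℝ) (hlam : ∀ i, 0 ≤ lam i) (hw : ∀ i, 0 ≤ w i) :
    (∑ i, f (lam i) * w i) =
      ∫ t : Set.Icc (0:ℝ) 1, (∑ i, whm (↑t) (lam i) * w i) ∂μ := by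
  rw [MeasureTheory.integral_finset_sum _ (fun i _ => integrable_whm_comb μ lam w hlam hw i)]
  congr 1
  funext i
  rw [hf (lam i) (hlam i), ← MeasureTheory.integral_mul_const]

open Matrix in
lemma qf_cfc {n : ℕ} {M : Matrix (Fin n) (Fin n) ℂ} (hM : M.IsHermitian) (g : ℝ → ℝ)
    (x : Fin n → ℂ) :
    dotProduct (star x) (cfc g M *ᵥ x) =
      ((∑ i, g (hM.eigenvalues i) *
        Complex.normSq ((star (hM.eigenvectorUnitary : Matrix (Fin n) (Fin n) ℂ) *ᵥ x) i) : ℝ)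
        : ℂ) := by
  set U := (hM.eigenvectorUnitary : Matrix (Fin n) (Fin n) ℂ) with hU
  set y := star U *ᵥ x with hy
  set d : Fin n → ℂ := Complex.ofReal ∘ g ∘ hM.eigenvalues with hd
  have h1 : cfc g M = U * Matrix.diagonal d * star U := by
    rw [hM.cfc_eq, Matrix.IsHermitian.cfc]
    rfl
  have hsy : star x ᵥ* U = star y := by
    rw [hy, Matrix.star_mulVec, Matrix.star_eq_conjTranspose, Matrix.conjTranspose_conjTranspose]
  rw [h1, ← Matrix.mulVec_mulVec, ← Matrix.mulVec_mulVec, Matrix.dotProduct_mulVec (star x) U,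
    hsy, ← hy]
  simp only [dotProduct, Matrix.mulVec_diagonal, Pi.star_apply]
  rw [Complex.ofReal_sum]
  congr 1
  funext i
  rw [hd]
  simp only [Function.comp_apply, Complex.ofReal_mul]
  rw [show (Complex.normSq (y i) : ℂ) = starRingEnd ℂ (y i) * y i from Complex.normSq_eq_conj_mul_self]
  rw [Complex.star_def]
  ring

open Matrix in
theorem stmt0 (μ : Measure (Set.Icc (0 : ℝ) 1)) [IsFiniteMeasure μ] (f : ℝ → ℝ)
    (hf : ∀ x : ℝ, 0 ≤ x → f x = ∫ t : Set.Icc (0 : ℝ) 1, whm (t : ℝ) x ∂μ) :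
    ∀ (n : ℕ) (A B : Matrix (Fin n) (Fin n) ℂ),
      A.PosSemidef → B.PosSemidef → (B - A).PosSemidef →
      (cfc f B - cfc f A).PosSemidef := by
  intro n A B hA hB hAB
  have hAH : A.IsHermitian := hA.1
  have hBH : B.IsHermitian := hB.1
  apply Matrix.PosSemidef.of_dotProduct_mulVec_nonneg
  · have h : IsSelfAdjoint (cfc f B - cfc f A) := (cfc_predicate f B).sub (cfc_predicate f A)
    rw [Matrix.IsHermitian, ← Matrix.star_eq_conjTranspose]
    exact h
  · intro x
    set lamA := hAH.eigenvalues with hlamAdef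
    set lamB := hBH.eigenvalues with hlamBdef
    set wA : Fin n → ℝ := fun i =>
      Complex.normSq ((star (hAH.eigenvectorUnitary : Matrix (Fin n) (Fin n) ℂ) *ᵥ x) i) with hwAdef
    set wB : Fin n → ℝ := fun i =>
      Complex.normSq ((star (hBH.eigenvectorUnitary : Matrix (Fin n) (Fin n) ℂ) *ᵥ x) i) with hwBdef
    have hwA : ∀ i, 0 ≤ wA i := fun i => Complex.normSq_nonneg _
    have hwB : ∀ i, 0 ≤ wB i := fun i => Complex.normSq_nonneg _
    have hlamA : ∀ i, 0 ≤ lamA i := fun i => hA.eigenvalues_nonneg i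
    have hlamB : ∀ i, 0 ≤ lamB i := fun i => hB.eigenvalues_nonneg i
    rw [Matrix.sub_mulVec, dotProduct_sub, qf_cfc hAH f x, qf_cfc hBH f x,
      ← Complex.ofReal_sub]
    rw [show ((0:ℂ) ≤ ((((∑ i, f (lamB i) * wB i) - ∑ i, f (lamA i) * wA i) : ℝ) : ℂ)) ↔
      (0 : ℝ) ≤ ((∑ i, f (lamB i) * wB i) - ∑ i, f (lamA i) * wA i) from Complex.zero_le_real]
    rw [sub_nonneg, sum_integral_eq μ f hf lamA wA hlamA hwA,
      sum_integral_eq μ f hf lamB wB hlamB hwB]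
    apply MeasureTheory.integral_mono
    · exact MeasureTheory.integrable_finset_sum _
        (fun i _ => integrable_whm_comb μ lamA wA hlamA hwA i)
    · exact MeasureTheory.integrable_finset_sum _
        (fun i _ => integrable_whm_comb μ lamB wB hlamB hwB i)
    · intro t
      have hps := mono_whm (↑t) t.2.1 t.2.2 hA hB hAB
      have h2 := hps.dotProduct_mulVec_nonneg x
      rw [Matrix.sub_mulVec, dotProduct_sub, qf_cfc hAH (whm ↑t) x,
        qf_cfc hBH (whm ↑t) x, ← Complex.ofReal_sub, Complex.zero_le_real, sub_nonneg] at h2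
      exact h2
end

section
/- Let μ₁ and μ₂ be finite Borel measures on [0,1] such that ∫_{[0,1]} (1 !_t x) dμ₁(t) = ∫_{[0,1]} (1 !_t x) dμ₂(t) for every x ∈ [0,∞). Then μ₁ = μ₂. -/
open MeasureTheory Real

namespace WhmAux

abbrev I := Set.Icc (0 : ℝ) 1

/-- moments with sign -/
noncomputable def mom (μ : Measure I) (n : ℕ) : ℝ := ∫ t : I, (-(t : ℝ)) ^ n ∂μ

lemma contInt (μ : Measure I) [IsFiniteMeasure μ] {f : I → ℝ} (hf : Continuous f) :
    Integrable f μ :=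
  (BoundedContinuousFunction.mkOfCompact ⟨f, hf⟩).integrable μ

lemma hasFPS (μ : Measure I) [IsFiniteMeasure μ] :
    HasFPowerSeriesOnBall (fun z : ℝ => ∫ t : I, (1 + (t : ℝ) * z)⁻¹ ∂μ)
      (FormalMultilinearSeries.ofScalars ℝ (mom μ)) 0 1 := by
  constructor
  · apply FormalMultilinearSeries.le_radius_of_bound _ (μ Set.univ).toReal (r := 1)
    intro n
    have h1 : ‖FormalMultilinearSeries.ofScalars ℝ (mom μ) n‖ ≤ ‖mom μ n‖ := by
      refine le_trans (ContinuousMultilinearMap.opNorm_smul_le _ _) ?_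
      rw [ContinuousMultilinearMap.norm_mkPiAlgebraFin, mul_one]
    have h2 : ‖mom μ n‖ ≤ (μ Set.univ).toReal := by
      have : ‖mom μ n‖ ≤ 1 * (μ Set.univ).toReal := by
        apply norm_integral_le_of_norm_le_const
        filter_upwards with t
        rw [norm_pow, norm_neg, Real.norm_of_nonneg t.2.1]
        exact pow_le_one₀ t.2.1 t.2.2
      simpa using this
    simpa using h1.trans h2
  · exact one_pos
  · intro y hy
    rw [EMetric.mem_ball, edist_zero_right] at hy
    have hy1 : ‖y‖ < 1 := by rw [enorm_eq_nnnorm] at hy; exact_mod_cast hy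
    -- pointwise facts
    have key : ∀ t : I, ‖-(t : ℝ) * y‖ < 1 := by
      intro t
      have ht := t.2.1; have ht' := t.2.2
      calc ‖-(t : ℝ) * y‖ = (t : ℝ) * ‖y‖ := by
            rw [norm_mul, norm_neg, Real.norm_of_nonneg ht]
        _ ≤ 1 * ‖y‖ := by apply mul_le_mul_of_nonneg_right ht' (norm_nonneg y)
        _ < 1 := by simpa using hy1
    have hsum : HasSum (fun n => ∫ t : I, (-(t : ℝ) * y) ^ n ∂μ)
        (∫ t : I, (∑' n : ℕ, (-(t : ℝ) * y) ^ n) ∂μ) := by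
      apply hasSum_integral_of_summable_integral_norm
      · intro n
        exact contInt μ (by continuity)
      · apply Summable.of_nonneg_of_le
          (fun n => integral_nonneg fun t => norm_nonneg _)
          (fun n => ?_)
          (((summable_geometric_of_lt_one (abs_nonneg y) hy1).mul_right
            (μ Set.univ).toReal))
        have : ∀ t : I, ‖‖(-(t : ℝ) * y) ^ n‖‖ ≤ |y| ^ n := by
          intro t
          rw [norm_norm, norm_pow, norm_mul, norm_neg,
            Real.norm_of_nonneg t.2.1]
          apply pow_le_pow_left₀ (mul_nonneg t.2.1 (norm_nonneg y))
          calc (t : ℝ) * ‖y‖ ≤ 1 * ‖y‖ :=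
              mul_le_mul_of_nonneg_right t.2.2 (norm_nonneg y)
            _ = |y| := by simp [Real.norm_eq_abs]
        calc ∫ t : I, ‖(-(t : ℝ) * y) ^ n‖ ∂μ
            = ‖∫ t : I, ‖(-(t : ℝ) * y) ^ n‖ ∂μ‖ := by
              rw [Real.norm_of_nonneg (integral_nonneg fun t => norm_nonneg _)]
          _ ≤ |y| ^ n * (μ Set.univ).toReal :=
              norm_integral_le_of_norm_le_const (Filter.Eventually.of_forall this)
    have e1 : ∀ n : ℕ, (FormalMultilinearSeries.ofScalars ℝ (mom μ) n fun _ => y)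
        = ∫ t : I, (-(t : ℝ) * y) ^ n ∂μ := by
      intro n
      rw [FormalMultilinearSeries.ofScalars_apply_eq, mom, smul_eq_mul,
        ← integral_mul_const]
      congr 1; ext t; rw [mul_pow]
    have e2 : (∫ t : I, (∑' n : ℕ, (-(t : ℝ) * y) ^ n) ∂μ)
        = ∫ t : I, (1 + (t : ℝ) * y)⁻¹ ∂μ := by
      congr 1; ext t
      rw [tsum_geometric_of_norm_lt_one (key t)]
      ring_nf
    simp only [zero_add]
    simp_rw [e1]
    rw [← e2]
    exact hsum

end WhmAux

theorem stmt1 (μ₁ μ₂ : Measure (Set.Icc (0 : ℝ) 1))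
    [IsFiniteMeasure μ₁] [IsFiniteMeasure μ₂]
    (h : ∀ x : ℝ, 0 ≤ x →
      (∫ t : Set.Icc (0 : ℝ) 1, whm (t : ℝ) x ∂μ₁) =
        ∫ t : Set.Icc (0 : ℝ) 1, whm (t : ℝ) x ∂μ₂) :
    μ₁ = μ₂ := by
  classical
  -- Step 1: equality of the transforms on the unit ball
  have hball : ∀ z : ℝ, ‖z‖ < 1 →
      (∫ t : WhmAux.I, (1 + (t : ℝ) * z)⁻¹ ∂μ₂) =
        ∫ t : WhmAux.I, (1 + (t : ℝ) * z)⁻¹ ∂μ₁ := by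
    intro z hz
    rcases abs_lt.1 hz with ⟨hz1, hz2⟩
    have hz1' : (0 : ℝ) < 1 + z := by linarith
    set x : ℝ := (1 + z)⁻¹ with hxdef
    have hx0 : (0 : ℝ) < x := inv_pos.2 hz1'
    have key : ∀ t : WhmAux.I, whm (t : ℝ) x = (1 + (t : ℝ) * z)⁻¹ := by
      intro t
      have ht := t.2.1; have ht' := t.2.2
      have h1 : (0 : ℝ) < 1 + (t : ℝ) * z := by nlinarith
      rw [whm, if_neg (by push_neg; intro _; exact ne_of_gt hx0)]
      have hden : (1 - (t : ℝ)) * x + t = (1 + (t : ℝ) * z) * x := by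
        rw [hxdef]
        field_simp
        ring
      rw [hden, mul_comm, div_mul_cancel_left₀ (ne_of_gt hx0)]
    calc (∫ t : WhmAux.I, (1 + (t : ℝ) * z)⁻¹ ∂μ₂)
        = ∫ t : WhmAux.I, whm (t : ℝ) x ∂μ₂ := by
          congr 1; ext t; rw [key t]
      _ = ∫ t : WhmAux.I, whm (t : ℝ) x ∂μ₁ := (h x hx0.le).symm
      _ = ∫ t : WhmAux.I, (1 + (t : ℝ) * z)⁻¹ ∂μ₁ := by
          congr 1; ext t; rw [key t]
  -- Step 2: equality of the (signed) moments
  have hmom : WhmAux.mom μ₁ = WhmAux.mom μ₂ := by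
    have h₁ := (WhmAux.hasFPS μ₁).hasFPowerSeriesAt
    have h₂ := (WhmAux.hasFPS μ₂).hasFPowerSeriesAt
    have heq : (fun z : ℝ => ∫ t : WhmAux.I, (1 + (t : ℝ) * z)⁻¹ ∂μ₂)
        =ᶠ[nhds (0 : ℝ)] fun z : ℝ => ∫ t : WhmAux.I, (1 + (t : ℝ) * z)⁻¹ ∂μ₁ := by
      filter_upwards [Metric.ball_mem_nhds (0 : ℝ) one_pos] with z hz
      exact hball z (by simpa [Real.norm_eq_abs, Real.dist_eq] using hz)
    have := h₁.eq_formalMultilinearSeries (h₂.congr heq)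
    exact (FormalMultilinearSeries.ofScalars_series_eq_iff ℝ _ _).1 this
  -- Step 3: equality of the actual moments
  have hmon : ∀ n : ℕ, (∫ t : WhmAux.I, (t : ℝ) ^ n ∂μ₁) =
      ∫ t : WhmAux.I, (t : ℝ) ^ n ∂μ₂ := by
    intro n
    have e : ∀ μ : Measure WhmAux.I, WhmAux.mom μ n
        = (-1 : ℝ) ^ n * ∫ t : WhmAux.I, (t : ℝ) ^ n ∂μ := by
      intro μ
      rw [WhmAux.mom, ← integral_const_mul]
      congr 1; ext t; rw [← mul_pow]; ring_nf
    have := congrFun hmom n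
    rw [e μ₁, e μ₂] at this
    exact mul_left_cancel₀ (pow_ne_zero n (by norm_num)) this
  -- Step 4: equality on polynomials
  have hpoly : ∀ p : Polynomial ℝ,
      (∫ t : WhmAux.I, p.eval (t : ℝ) ∂μ₁) = ∫ t : WhmAux.I, p.eval (t : ℝ) ∂μ₂ := by
    intro p
    have ev : ∀ t : WhmAux.I, p.eval (t : ℝ) =
        ∑ i ∈ Finset.range (p.natDegree + 1), p.coeff i * (t : ℝ) ^ i := by
      intro t; rw [Polynomial.eval_eq_sum_range]
    simp_rw [ev]
    rw [integral_finset_sum _ fun i _ => WhmAux.contInt μ₁ (by continuity),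
      integral_finset_sum _ fun i _ => WhmAux.contInt μ₂ (by continuity)]
    refine Finset.sum_congr rfl fun i _ => ?_
    rw [integral_const_mul, integral_const_mul, hmon i]
  -- Step 5: equality on all continuous functions
  have hcontmap : ∀ μ : Measure WhmAux.I, IsFiniteMeasure μ →
      Continuous fun f : C(WhmAux.I, ℝ) => ∫ t, f t ∂μ := by
    intro μ hμ
    refine LipschitzWith.continuous (K := (μ Set.univ).toNNReal) ?_
    apply LipschitzWith.of_dist_le_mul
    intro f g
    rw [dist_eq_norm, dist_eq_norm]
    have : (∫ t, f t ∂μ) - ∫ t, g t ∂μ = ∫ t, (f - g) t ∂μ := by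
      simp only [ContinuousMap.sub_apply]
      exact (integral_sub (WhmAux.contInt μ f.continuous)
        (WhmAux.contInt μ g.continuous)).symm
    rw [this, mul_comm]
    refine le_trans (norm_integral_le_of_norm_le_const
      (Filter.Eventually.of_forall fun t => (f - g).norm_coe_le_norm t)) ?_
    rw [ENNReal.coe_toNNReal_eq_toReal]
    exact le_of_eq rfl
  have hcont : ∀ f : C(WhmAux.I, ℝ), (∫ t, f t ∂μ₁) = ∫ t, f t ∂μ₂ := by
    have hSclosed : IsClosed {f : C(WhmAux.I, ℝ) | (∫ t, f t ∂μ₁) = ∫ t, f t ∂μ₂} :=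
      isClosed_eq (hcontmap μ₁ inferInstance) (hcontmap μ₂ inferInstance)
    have hsub : (polynomialFunctions WhmAux.I : Set C(WhmAux.I, ℝ)) ⊆
        {f : C(WhmAux.I, ℝ) | (∫ t, f t ∂μ₁) = ∫ t, f t ∂μ₂} := by
      rintro f ⟨p, -, rfl⟩
      simpa [Polynomial.toContinuousMapOnAlgHom, Polynomial.toContinuousMapOn,
        Polynomial.toContinuousMap] using hpoly p
    intro f
    have hf : f ∈ closure (polynomialFunctions WhmAux.I : Set C(WhmAux.I, ℝ)) := by
      rw [← Subalgebra.topologicalClosure_coe, polynomialFunctions.topologicalClosure]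
      trivial
    exact hSclosed.closure_subset_iff.2 hsub hf
  -- Step 6: conclude
  apply MeasureTheory.ext_of_forall_lintegral_eq_of_IsFiniteMeasure
  intro f
  rw [lintegral_coe_eq_integral _ (f.integrable_of_nnreal μ₁),
    lintegral_coe_eq_integral _ (f.integrable_of_nnreal μ₂)]
  congr 1
  exact hcont ⟨fun t => (f t : ℝ), NNReal.continuous_coe.comp f.continuous⟩
end

section
/- For every x ∈ [0,∞), log(1+x) = ∫_{1/2}^{1} (1/t) · x/((1-t)·x + t) dt; that is, the associated measure of the operator monotone function x ↦ log(1+x) is the measure on [0,1] with density t ↦ (1/t)·χ_{[1/2,1]}(t) with respect to Lebesgue measure. -/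
open MeasureTheory Real

theorem stmt5 (x : ℝ) (hx : 0 ≤ x) :
    Real.log (1 + x) = ∫ t in (1 / 2 : ℝ)..1, (1 / t) * (x / ((1 - t) * x + t)) := by
  have hpos : ∀ t ∈ Set.uIcc (1/2 : ℝ) 1, 0 < t ∧ 0 < (1 - t) * x + t := by
    intro t ht
    rw [Set.uIcc_of_le (by norm_num)] at ht
    have ht0 : (0:ℝ) < t := lt_of_lt_of_le (by norm_num) ht.1
    exact ⟨ht0, lt_of_lt_of_le ht0
      (le_add_of_nonneg_left (mul_nonneg (by linarith [ht.2]) hx))⟩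
  have hderiv : ∀ t ∈ Set.uIcc (1/2 : ℝ) 1,
      HasDerivAt (fun t => Real.log t - Real.log ((1 - t) * x + t))
        ((1 / t) * (x / ((1 - t) * x + t))) t := by
    intro t ht
    obtain ⟨ht0, hd0⟩ := hpos t ht
    have h1 : HasDerivAt (fun t : ℝ => Real.log t) (1/t) t := by
      simpa using Real.hasDerivAt_log ht0.ne'
    have h2 : HasDerivAt (fun t : ℝ => (1 - t) * x + t) (-1 * x + 1) t := by
      exact (((hasDerivAt_id t).const_sub 1).mul_const x).add (hasDerivAt_id t)
    have h3 := (h2.log hd0.ne')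
    have := h1.sub h3
    refine this.congr_deriv ?_
    symm
    rw [div_mul_div_comm, one_mul, div_sub_div _ _ ht0.ne' hd0.ne']
    congr 1
    ring
  have hcont : IntervalIntegrable (fun t => (1 / t) * (x / ((1 - t) * x + t)))
      MeasureTheory.volume (1/2 : ℝ) 1 := by
    apply ContinuousOn.intervalIntegrable
    apply ContinuousOn.mul
    · exact continuousOn_const.div continuousOn_id (fun t ht => (hpos t ht).1.ne')
    · exact continuousOn_const.div
        (by fun_prop) (fun t ht => (hpos t ht).2.ne')
  rw [intervalIntegral.integral_eq_sub_of_hasDerivAt hderiv hcont]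
  have h2 : ((1:ℝ) - 1/2) * x + 1/2 = (1 + x)/2 := by ring
  have h1 : ((1:ℝ) - 1) * x + 1 = 1 := by ring
  rw [h1, h2, Real.log_div (by intro h; linarith) (by norm_num), Real.log_one,
    Real.log_div (by intro h; linarith) (by norm_num)]
  ring
end

section
/- For every α ∈ (0,1) and every x ∈ (0,∞), x^α = (sin(απ)/π) · ∫_{0}^{∞} x·λ^{α-1}/(x+λ) dλ. -/
open MeasureTheory Real

lemma beta_real (α : ℝ) (hα : α ∈ Set.Ioo (0 : ℝ) 1) :
    ∫ t in Set.Ioo (0:ℝ) 1, t ^ (α - 1) * (1 - t) ^ ((1 - α) - 1) = π / Real.sin (π * α) := by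
  obtain ⟨h0, h1⟩ := hα
  have hb : (Complex.betaIntegral α (1 - α) : ℂ)
      = ((∫ t in (0:ℝ)..1, t ^ (α - 1) * (1 - t) ^ ((1 - α) - 1) : ℝ) : ℂ) := by
    rw [Complex.betaIntegral, ← intervalIntegral.integral_ofReal]
    refine intervalIntegral.integral_congr fun t ht => ?_
    rw [Set.uIcc_of_le (by norm_num : (0:ℝ) ≤ 1)] at ht
    rw [Complex.ofReal_mul, Complex.ofReal_cpow ht.1, Complex.ofReal_cpow (by linarith [ht.2])]
    push_cast
    ring_nf
  have hΓ : Complex.betaIntegral α (1 - α) = ((π / Real.sin (π * α) : ℝ) : ℂ) := by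
    have h := Complex.Gamma_mul_Gamma_eq_betaIntegral
      (s := (α : ℂ)) (t := (1 - α : ℝ)) (by simpa using h0) (by simp; linarith)
    push_cast at h
    rw [show (α : ℂ) + (1 - (α:ℂ)) = 1 by ring, Complex.Gamma_one, one_mul] at h
    rw [← h, Complex.Gamma_mul_Gamma_one_sub,
      ← Complex.ofReal_mul, ← Complex.ofReal_sin, ← Complex.ofReal_div]
  rw [hΓ] at hb
  have := Complex.ofReal_injective hb.symm
  rw [← this, intervalIntegral.integral_of_le (by norm_num : (0:ℝ) ≤ 1),
    integral_Ioc_eq_integral_Ioo]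

lemma key_integral (α : ℝ) (hα : α ∈ Set.Ioo (0 : ℝ) 1) :
    ∫ u in Set.Ioi (0:ℝ), u ^ (α - 1) / (1 + u) = π / Real.sin (π * α) := by
  obtain ⟨h0, h1⟩ := hα
  set f : ℝ → ℝ := fun t => t / (1 - t) with hf
  have himg : f '' Set.Ioo 0 1 = Set.Ioi (0:ℝ) := by
    ext u
    simp only [Set.mem_image, Set.mem_Ioo, Set.mem_Ioi]
    constructor
    · rintro ⟨t, ⟨ht0, ht1⟩, rfl⟩
      exact div_pos ht0 (by linarith)
    · intro hu
      refine ⟨u / (1 + u), ⟨div_pos hu (by linarith), ?_⟩, ?_⟩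
      · rw [div_lt_one (by linarith)]; linarith
      · simp only [hf]
        field_simp
        ring
  have hinj : Set.InjOn f (Set.Ioo 0 1) := by
    rintro a ⟨ha0, ha1⟩ b ⟨hb0, hb1⟩ hab
    have h1a : (1:ℝ) - a ≠ 0 := by linarith
    have h1b : (1:ℝ) - b ≠ 0 := by linarith
    simp only [hf] at hab
    field_simp at hab
    nlinarith [hab]
  have hder : ∀ t ∈ Set.Ioo (0:ℝ) 1, HasDerivWithinAt f ((1 - t)⁻¹ ^ 2) (Set.Ioo 0 1) t := by
    intro t ⟨ht0, ht1⟩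
    have h1t : (1:ℝ) - t ≠ 0 := by linarith
    have : HasDerivAt f ((1 * (1 - t) - t * (-1)) / (1 - t) ^ 2) t := by
      exact (hasDerivAt_id t).div ((hasDerivAt_id t).const_sub 1) h1t
    rw [show (1 * (1 - t) - t * (-1)) / (1 - t) ^ 2 = (1 - t)⁻¹ ^ 2 by
      rw [inv_pow, ← one_div]; congr 1; ring] at this
    exact this.hasDerivWithinAt
  have := integral_image_eq_integral_abs_deriv_smul measurableSet_Ioo hder hinj
    (fun u => u ^ (α - 1) / (1 + u))
  rw [himg] at this
  rw [this, ← beta_real α ⟨h0, h1⟩]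
  refine setIntegral_congr_fun measurableSet_Ioo fun t ⟨ht0, ht1⟩ => ?_
  have h1t : (0:ℝ) < 1 - t := by linarith
  have hft : 1 + f t = (1 - t)⁻¹ := by simp only [hf]; field_simp; ring
  have hA : (1 - t) ≠ 0 := h1t.ne'
  have hAr : (1 - t) ^ (α - 1) ≠ 0 := (Real.rpow_pos_of_pos h1t _).ne'
  rw [smul_eq_mul, hft, hf]
  simp only [Real.div_rpow ht0.le h1t.le]
  have h2 : (1 - t) ^ ((1:ℝ) - α - 1) = ((1 - t) ^ (α - 1))⁻¹ * (1 - t)⁻¹ := by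
    rw [show (1:ℝ) - α - 1 = (-(α - 1)) + (-1) by ring, Real.rpow_add h1t,
      Real.rpow_neg h1t.le, Real.rpow_neg_one]
  rw [h2]
  rw [abs_of_pos (by positivity : (0:ℝ) < (1 - t)⁻¹ ^ 2)]
  field_simp

theorem stmt6 (α : ℝ) (hα : α ∈ Set.Ioo (0 : ℝ) 1) (x : ℝ) (hx : 0 < x) :
    x ^ α = Real.sin (α * π) / π * ∫ l in Set.Ioi (0 : ℝ), x * l ^ (α - 1) / (x + l) := by
  obtain ⟨h0, h1⟩ := hα
  have hxα : x ^ α = x * x ^ (α - 1) := by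
    rw [show α = 1 + (α - 1) by ring, Real.rpow_one_add' hx.le (by simpa using h0.ne')]
    ring_nf
  have hsub : (∫ u in Set.Ioi (0:ℝ), (fun l => x * l ^ (α - 1) / (x + l)) (x * u))
      = x⁻¹ • ∫ l in Set.Ioi (x * 0), x * l ^ (α - 1) / (x + l) :=
    integral_comp_mul_left_Ioi (fun l => x * l ^ (α - 1) / (x + l)) 0 hx
  have heq : ∀ u ∈ Set.Ioi (0:ℝ), (fun l => x * l ^ (α - 1) / (x + l)) (x * u)
      = x ^ (α - 1) * (u ^ (α - 1) / (1 + u)) := by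
    intro u hu
    have hu : (0:ℝ) < u := hu
    simp only
    have h1u : (1:ℝ) + u ≠ 0 := by linarith
    rw [Real.mul_rpow hx.le hu.le, show x + x * u = x * (1 + u) by ring]
    field_simp
  rw [setIntegral_congr_fun measurableSet_Ioi heq, integral_const_mul, mul_zero,
    key_integral α ⟨h0, h1⟩, smul_eq_mul] at hsub
  have hI : (∫ l in Set.Ioi (0:ℝ), x * l ^ (α - 1) / (x + l))
      = x ^ α * (π / Real.sin (π * α)) := by
    rw [hxα, mul_assoc, hsub, ← mul_assoc, mul_inv_cancel₀ hx.ne', one_mul]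
  have hsin : Real.sin (α * π) ≠ 0 := by
    have := Real.sin_pos_of_pos_of_lt_pi (x := α * π)
      (by positivity) (by nlinarith [Real.pi_pos])
    linarith
  have hπ : (π : ℝ) ≠ 0 := Real.pi_ne_zero
  rw [hI, mul_comm π α]
  field_simp
end

section
/- For every α ∈ (0,1) and every x ∈ [0,∞), x^α = (sin(απ)/π) · ∫_{0}^{1} (1/(t^{1-α}·(1-t)^{α})) · x/((1-t)·x + t) dt; that is, the associated measure of the operator monotone function x ↦ x^α is the measure on [0,1] with density t ↦ (sin(απ)/π) · t^{α-1}(1-t)^{-α} with respect to Lebesgue measure. -/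
open MeasureTheory Real

lemma rpow_aux {t x D α : ℝ} (ht : 0 < t) (hx : 0 < x) (hD : 0 < D) (h1t : 0 < 1 - t) :
    x / D ^ 2 * ((t / D) ^ (α - 1) * ((1 - t) * x / D) ^ (-α))
      = x ^ (-α) * (t ^ (α - 1) * ((1 - t) ^ (-α) * (x / D))) := by
  have e2 : (D:ℝ) ^ (2:ℕ) = D ^ ((2:ℕ):ℝ) := (Real.rpow_natCast D 2).symm
  rw [Real.div_rpow ht.le hD.le, Real.div_rpow (by positivity) hD.le,
      Real.mul_rpow h1t.le hx.le, e2]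
  rw [div_eq_mul_inv, div_eq_mul_inv, div_eq_mul_inv, div_eq_mul_inv]
  rw [← Real.rpow_neg hD.le, ← Real.rpow_neg hD.le, ← Real.rpow_neg hD.le,
      ← Real.rpow_neg_one D]
  have hcomb : ∀ a b : ℝ, D ^ a * D ^ b = D ^ (a + b) := fun a b => (Real.rpow_add hD a b).symm
  calc x * D ^ (-((2:ℕ):ℝ)) * (t ^ (α - 1) * D ^ (-(α - 1)) * ((1 - t) ^ (-α) * x ^ (-α) * D ^ (-(-α))))
      = x * x ^ (-α) * (t ^ (α-1) * (1-t)^(-α)) * (D ^ (-((2:ℕ):ℝ)) * D ^ (-(α-1)) * D ^ (-(-α))) := by ring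
    _ = x ^ (-α) * (t ^ (α - 1) * ((1 - t) ^ (-α) * (x * D ^ (-1:ℝ)))) := by
        rw [hcomb, hcomb]
        norm_num
        ring

lemma beta_val (α : ℝ) (hα : α ∈ Set.Ioo (0 : ℝ) 1) :
    (∫ t in (0:ℝ)..1, t ^ (α - 1) * (1 - t) ^ (-α)) = π / Real.sin (π * α) := by
  obtain ⟨h0, h1⟩ := hα
  have hB : Complex.betaIntegral α (1 - α) = ↑π / Complex.sin (↑π * α) := by
    have := Complex.Gamma_mul_Gamma_eq_betaIntegral
      (show 0 < ((α:ℂ)).re by simpa using h0)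
      (show 0 < ((1:ℂ) - (α:ℂ)).re by simp; linarith)
    rw [show ((α:ℂ) + (1 - α)) = 1 by ring, Complex.Gamma_one, one_mul] at this
    rw [← this, Complex.Gamma_mul_Gamma_one_sub]
  have hcast : Complex.betaIntegral α (1 - α)
      = ((∫ t in (0:ℝ)..1, t ^ (α - 1) * (1 - t) ^ (-α) : ℝ) : ℂ) := by
    rw [Complex.betaIntegral, ← intervalIntegral.integral_ofReal]
    apply intervalIntegral.integral_congr
    intro t ht
    rw [Set.uIcc_of_le (by norm_num : (0:ℝ) ≤ 1)] at ht
    obtain ⟨ht0, ht1⟩ := ht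
    simp only [Complex.ofReal_mul, Complex.ofReal_cpow ht0,
      Complex.ofReal_cpow (show (0:ℝ) ≤ 1 - t by linarith)]
    push_cast
    ring_nf
  rw [hB] at hcast
  have : ((π / Real.sin (π * α) : ℝ) : ℂ)
      = ((∫ t in (0:ℝ)..1, t ^ (α - 1) * (1 - t) ^ (-α) : ℝ) : ℂ) := by
    rw [← hcast]; push_cast [Complex.ofReal_sin]; ring_nf
  exact_mod_cast this.symm

theorem stmt7 (α : ℝ) (hα : α ∈ Set.Ioo (0 : ℝ) 1) (x : ℝ) (hx : 0 ≤ x) :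
    x ^ α = Real.sin (α * π) / π *
      ∫ t in (0 : ℝ)..1, (1 / (t ^ (1 - α) * (1 - t) ^ α)) * (x / ((1 - t) * x + t)) := by
  obtain ⟨h0, h1⟩ := hα
  rcases eq_or_lt_of_le hx with rfl | hx
  · simp [Real.zero_rpow (ne_of_gt h0)]
  -- rewrite integrand
  have hInt : (∫ t in (0 : ℝ)..1, (1 / (t ^ (1 - α) * (1 - t) ^ α)) * (x / ((1 - t) * x + t)))
      = ∫ t in Set.Ioo (0:ℝ) 1, t ^ (α - 1) * ((1 - t) ^ (-α) * (x / ((1 - t) * x + t))) := by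
    rw [intervalIntegral.integral_of_le (by norm_num : (0:ℝ) ≤ 1),
      MeasureTheory.integral_Ioc_eq_integral_Ioo]
    apply setIntegral_congr_fun measurableSet_Ioo
    intro t ⟨ht0, ht1⟩
    show 1 / (t ^ (1 - α) * (1 - t) ^ α) * (x / ((1 - t) * x + t))
        = t ^ (α - 1) * ((1 - t) ^ (-α) * (x / ((1 - t) * x + t)))
    rw [show α - 1 = -(1 - α) by ring, Real.rpow_neg ht0.le,
      Real.rpow_neg (by linarith : (0:ℝ) ≤ 1 - t)]
    field_simp
  set φ : ℝ → ℝ := fun t => t / ((1 - t) * x + t) with hφ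
  have hD : ∀ t ∈ Set.Ioo (0:ℝ) 1, 0 < (1 - t) * x + t := by
    intro t ⟨ht0, ht1⟩
    have : 0 ≤ (1 - t) * x := mul_nonneg (by linarith) hx.le
    linarith
  have hderiv : ∀ t ∈ Set.Ioo (0:ℝ) 1,
      HasDerivWithinAt φ (x / ((1 - t) * x + t) ^ 2) (Set.Ioo 0 1) t := by
    intro t ht
    have hD' := hD t ht
    have h : HasDerivAt φ (x / ((1 - t) * x + t) ^ 2) t := by
      have h1' : HasDerivAt (fun t : ℝ => (1 - t) * x + t) (1 - x) t := by
        have : HasDerivAt (fun t : ℝ => (1 - t) * x + t) ((-1) * x + 1) t := by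
          apply HasDerivAt.add _ (hasDerivAt_id t)
          exact ((hasDerivAt_id t).const_sub 1).mul_const x
        convert this using 1; ring
      have := (hasDerivAt_id t).div h1' (ne_of_gt hD')
      convert this using 1
      · rfl
      · rfl
      · rfl
      · simp only [id]; ring
    exact h.hasDerivWithinAt
  have hinj : Set.InjOn φ (Set.Ioo 0 1) := by
    intro a ha b hb hab
    have hDa := hD a ha; have hDb := hD b hb
    rw [hφ] at hab
    field_simp at hab
    rw [eq_div_iff (by linarith)] at hab
    have : a * x = b * x := by nlinarith [hab]
    exact mul_right_cancel₀ (ne_of_gt hx) this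
  have himg : φ '' Set.Ioo 0 1 = Set.Ioo 0 1 := by
    ext u
    constructor
    · rintro ⟨t, ⟨ht0, ht1⟩, rfl⟩
      have hD' := hD t ⟨ht0, ht1⟩
      constructor
      · exact div_pos ht0 hD'
      · rw [hφ]
        simp only
        rw [div_lt_one hD']
        nlinarith [mul_pos (sub_pos.2 ht1) hx]
    · rintro ⟨hu0, hu1⟩
      have hE : (0:ℝ) < (1 - u) + u * x := by nlinarith
      refine ⟨u * x / ((1 - u) + u * x), ⟨?_, ?_⟩, ?_⟩
      · exact div_pos (mul_pos hu0 hx) hE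
      · rw [div_lt_one hE]; linarith
      · have hDt : (1 - u * x / ((1 - u) + u * x)) * x + u * x / ((1 - u) + u * x)
            = x / ((1 - u) + u * x) := by
          field_simp
          ring
        rw [hφ]
        simp only
        rw [hDt]
        rw [div_div_div_comm, div_self (ne_of_gt hE), div_one, mul_div_assoc,
          div_self (ne_of_gt hx), mul_one]
  have key := MeasureTheory.integral_image_eq_integral_abs_deriv_smul measurableSet_Ioo
    hderiv hinj (fun u => u ^ (α - 1) * (1 - u) ^ (-α))
  rw [himg] at key
  -- pointwise simplification of the RHS of key
  have hpt : ∀ t ∈ Set.Ioo (0:ℝ) 1,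
      |x / ((1 - t) * x + t) ^ 2| • (φ t ^ (α - 1) * (1 - φ t) ^ (-α))
      = x ^ (-α) * (t ^ (α - 1) * ((1 - t) ^ (-α) * (x / ((1 - t) * x + t)))) := by
    intro t ht
    obtain ⟨ht0, ht1⟩ := ht
    have hD' := hD t ⟨ht0, ht1⟩
    have hφt : φ t = t / ((1 - t) * x + t) := rfl
    have h1φ : 1 - φ t = (1 - t) * x / ((1 - t) * x + t) := by
      rw [hφt]; field_simp
      ring
    rw [smul_eq_mul, abs_of_pos (div_pos hx (by positivity)), hφt, h1φ]
    exact rpow_aux ht0 hx hD' (by linarith)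
  have hkey2 : (∫ u in Set.Ioo (0:ℝ) 1, u ^ (α - 1) * (1 - u) ^ (-α))
      = x ^ (-α) * ∫ t in Set.Ioo (0:ℝ) 1,
          t ^ (α - 1) * ((1 - t) ^ (-α) * (x / ((1 - t) * x + t))) := by
    rw [key, ← MeasureTheory.integral_const_mul]
    exact setIntegral_congr_fun measurableSet_Ioo hpt
  -- evaluate the beta integral
  have hbeta : (∫ u in Set.Ioo (0:ℝ) 1, u ^ (α - 1) * (1 - u) ^ (-α))
      = π / Real.sin (π * α) := by
    rw [← MeasureTheory.integral_Ioc_eq_integral_Ioo,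
      ← intervalIntegral.integral_of_le (by norm_num : (0:ℝ) ≤ 1)]
    exact beta_val α ⟨h0, h1⟩
  have hsin : Real.sin (α * π) ≠ 0 := by
    apply ne_of_gt
    apply Real.sin_pos_of_pos_of_lt_pi (by positivity)
    calc α * π < 1 * π := by
          apply mul_lt_mul_of_pos_right h1 Real.pi_pos
      _ = π := one_mul π
  have hπ : (π : ℝ) ≠ 0 := ne_of_gt Real.pi_pos
  rw [hInt]
  have hI : (∫ t in Set.Ioo (0:ℝ) 1,
      t ^ (α - 1) * ((1 - t) ^ (-α) * (x / ((1 - t) * x + t))))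
      = x ^ α * (π / Real.sin (π * α)) := by
    rw [← hbeta, hkey2, ← mul_assoc, ← Real.rpow_add hx]
    norm_num
  rw [hI, show π * α = α * π from mul_comm _ _]
  field_simp
end

section
/- For every x ∈ (0,∞) with x ≠ 1, (x-1)/log(x) = ∫_{0}^{1} [ x/((1-t)·x + t) ] · 1/( t·(1-t)·( π² + (log(t/(1-t)))² ) ) dt; that is, the associated measure of the operator monotone (logarithmic mean) function x ↦ (x-1)/log(x) is the measure on [0,1] with density t ↦ 1/( t(1-t)(π² + log²(t/(1-t))) ) with respect to Lebesgue measure. -/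
open MeasureTheory Real

namespace Stmt9Helpers
open Set
-- FTC lemma 1
lemma exp_int (c : ℝ) (hc : c ≠ 0) : ∫ s in (0:ℝ)..1, Real.exp (c*s) = (Real.exp c - 1)/c := by
  have h : ∀ s ∈ Set.uIcc (0:ℝ) 1, HasDerivAt (fun u => Real.exp (c*u)/c) (Real.exp (c*s)) s := by
    intro s _
    have h1 : HasDerivAt (fun u : ℝ => c*u) c s := by
      simpa using (hasDerivAt_id s).const_mul c
    have := (h1.exp).div_const c
    simpa [mul_div_assoc, mul_comm, mul_div_cancel_left₀ _ hc] using this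
  rw [intervalIntegral.integral_eq_sub_of_hasDerivAt h]
  · simp [sub_div]
  · exact (Real.continuous_exp.comp (continuous_const.mul continuous_id)).intervalIntegrable _ _

-- FTC lemma 2
lemma sin_exp_int (c : ℝ) : ∫ s in (0:ℝ)..1, Real.sin (π*s) * Real.exp (c*s)
    = π * (Real.exp c + 1)/(π^2 + c^2) := by
  have hd : (0:ℝ) < π^2 + c^2 := by positivity
  have h : ∀ s ∈ Set.uIcc (0:ℝ) 1, HasDerivAt
      (fun u => Real.exp (c*u)*(c*Real.sin (π*u) - π*Real.cos (π*u))/(π^2+c^2))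
      (Real.sin (π*s) * Real.exp (c*s)) s := by
    intro s _
    have h1 : HasDerivAt (fun u : ℝ => c*u) c s := by
      simpa using (hasDerivAt_id s).const_mul c
    have h2 : HasDerivAt (fun u : ℝ => π*u) π s := by
      simpa using (hasDerivAt_id s).const_mul π
    have hsin : HasDerivAt (fun u : ℝ => Real.sin (π*u)) (Real.cos (π*s) * π) s :=
      (Real.hasDerivAt_sin (π*s)).comp s h2
    have hcos : HasDerivAt (fun u : ℝ => Real.cos (π*u)) (-Real.sin (π*s) * π) s :=
      (Real.hasDerivAt_cos (π*s)).comp s h2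
    have hexp : HasDerivAt (fun u : ℝ => Real.exp (c*u)) (Real.exp (c*s) * c) s := by
      simpa [mul_comm] using h1.exp
    have := (hexp.mul ((hsin.const_mul c).sub (hcos.const_mul π))).div_const (π^2+c^2)
    refine this.congr_deriv ?_
    simp only [Pi.sub_apply]; field_simp
    ring
  rw [intervalIntegral.integral_eq_sub_of_hasDerivAt h]
  · simp [Real.sin_pi, Real.cos_pi]
    ring
  · exact ((Real.continuous_sin.comp (continuous_const.mul continuous_id)).mul
      (Real.continuous_exp.comp (continuous_const.mul continuous_id))).intervalIntegrable _ _

noncomputable def phi (t : ℝ) : ℝ := t / (1 - t)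

lemma phi_image : phi '' Ioo 0 1 = Ioi 0 := by
  ext y
  constructor
  · rintro ⟨t, ⟨ht0, ht1⟩, rfl⟩
    have : 0 < 1 - t := by linarith
    exact div_pos ht0 this
  · intro hy
    refine ⟨y/(1+y), ⟨?_, ?_⟩, ?_⟩
    · exact div_pos hy (by linarith [mem_Ioi.1 hy])
    · rw [div_lt_one (by linarith [mem_Ioi.1 hy])]; linarith [mem_Ioi.1 hy]
    · have h1 : (0:ℝ) < 1 + y := by linarith [mem_Ioi.1 hy]
      unfold phi
      have h2 : 1 - y/(1+y) = 1/(1+y) := by field_simp; ring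
      rw [h2]
      field_simp
lemma phi_injOn : InjOn phi (Ioo 0 1) := by
  intro a ⟨ha0, ha1⟩ b ⟨hb0, hb1⟩ h
  unfold phi at h
  rw [div_eq_div_iff (by linarith) (by linarith)] at h
  nlinarith
lemma phi_deriv : ∀ t ∈ Ioo (0:ℝ) 1, HasDerivWithinAt phi (1/(1-t)^2) (Ioo 0 1) t := by
  intro t ⟨ht0, ht1⟩
  have h1 : (1:ℝ) - t ≠ 0 := by linarith
  have := ((hasDerivAt_id t).div ((hasDerivAt_const t 1).sub (hasDerivAt_id t)) h1)
  refine (this.congr_deriv ?_).hasDerivWithinAt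
  simp only [Pi.sub_apply, id]; field_simp; ring

lemma subst_eq (g : ℝ → ℝ) :
    ∫ y in Ioi (0:ℝ), g y = ∫ t in Ioo (0:ℝ) 1, |1/(1-t)^2| * g (phi t) := by
  rw [← phi_image]
  simpa [smul_eq_mul] using integral_image_eq_integral_abs_deriv_smul measurableSet_Ioo phi_deriv phi_injOn g

lemma subst_integrable (g : ℝ → ℝ) :
    IntegrableOn g (Ioi (0:ℝ)) ↔ IntegrableOn (fun t => |1/(1-t)^2| * g (phi t)) (Ioo (0:ℝ) 1) := by
  rw [← phi_image]
  simpa [smul_eq_mul] using integrableOn_image_iff_integrableOn_abs_deriv_smul measurableSet_Ioo phi_deriv phi_injOn g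

lemma beta_val {s : ℝ} (hs0 : 0 < s) (hs1 : s < 1) :
    ∫ t in (0:ℝ)..1, t^(s-1) * (1-t)^(-s) = π / Real.sin (π*s) := by
  have key : Complex.betaIntegral s (1-s) = ((∫ t in (0:ℝ)..1, t^(s-1) * (1-t)^(-s) : ℝ) : ℂ) := by
    rw [Complex.betaIntegral, ← intervalIntegral.integral_ofReal]
    apply intervalIntegral.integral_congr
    intro t ht
    rw [Set.uIcc_of_le (by norm_num : (0:ℝ) ≤ 1)] at ht
    have h2 : (0:ℝ) ≤ 1 - t := by linarith [ht.2]
    simp only [Complex.ofReal_mul, Complex.ofReal_cpow ht.1, Complex.ofReal_cpow h2]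
    push_cast
    norm_num
  have h1 : Complex.Gamma s * Complex.Gamma (1-s) = Complex.betaIntegral s (1-s) := by
    have := Complex.Gamma_mul_Gamma_eq_betaIntegral (s := (s:ℂ)) (t := ((1-s:ℝ):ℂ))
      (by simpa using hs0) (by simpa using (by linarith : (0:ℝ) < 1-s))
    simpa using this
  have h2 : Real.Gamma s * Real.Gamma (1-s) = π / Real.sin (π*s) :=
    Real.Gamma_mul_Gamma_one_sub s
  have h3 : ((Real.Gamma s * Real.Gamma (1-s) : ℝ) : ℂ) = Complex.Gamma s * Complex.Gamma (1-s) := by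
    rw [Complex.ofReal_mul, Complex.Gamma_ofReal,
      show (1 - (s:ℂ)) = ((1-s:ℝ):ℂ) by push_cast; ring, Complex.Gamma_ofReal]
  have := h3.trans (h1.trans key)
  rw [h2] at this
  exact_mod_cast this.symm

lemma beta_integrable {s : ℝ} (hs0 : 0 < s) (hs1 : s < 1) :
    IntegrableOn (fun t : ℝ => t^(s-1) * (1-t)^(-s)) (Ioo (0:ℝ) 1) := by
  have hc : IntervalIntegrable (fun t : ℝ => (t:ℂ)^((s:ℂ)-1) * ((1:ℂ)-t)^(((1-s:ℝ):ℂ)-1)) volume 0 1 := by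
    have := Complex.betaIntegral_convergent (u := (s:ℂ)) (v := ((1-s:ℝ):ℂ))
      (by simpa using hs0) (by simpa using (by linarith : (0:ℝ) < 1-s))
    exact this
  rw [intervalIntegrable_iff_integrableOn_Ioo_of_le (by norm_num)] at hc
  have hre := hc.re
  apply hre.congr
  refine (ae_restrict_iff' measurableSet_Ioo).2 (.of_forall fun t ht => ?_)
  have h2 : (0:ℝ) ≤ 1 - t := by linarith [ht.2]
  have e1 : ((t:ℂ))^((s:ℂ)-1) = ((t^(s-1) : ℝ) : ℂ) := by
    rw [Complex.ofReal_cpow ht.1.le]; push_cast; norm_num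
  have e2 : ((1:ℂ) - t)^(((1-s:ℝ):ℂ)-1) = (((1-t)^(-s) : ℝ) : ℂ) := by
    rw [Complex.ofReal_cpow h2]; push_cast; norm_num
  simp only [e1, e2, ← Complex.ofReal_mul]
  simp

-- assume previous lemmas; test transformation identity plus assembly with sorried prereqs

lemma transform_pt {s t : ℝ} (ht : t ∈ Ioo (0:ℝ) 1) :
    |1/(1-t)^2| * (Real.exp ((s-1) * Real.log (phi t)) / (1 + phi t))
      = t^(s-1) * (1-t)^(-s) := by
  obtain ⟨ht0, ht1⟩ := ht
  have h1 : (0:ℝ) < 1 - t := by linarith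
  have hphi : 0 < phi t := div_pos ht0 h1
  have hlog : Real.log (phi t) = Real.log t - Real.log (1-t) := Real.log_div ht0.ne' h1.ne'
  have h2 : 1 + phi t = 1/(1-t) := by unfold phi; field_simp; ring
  rw [hlog, h2, Real.rpow_def_of_pos ht0, Real.rpow_def_of_pos h1]
  rw [abs_of_pos (by positivity : (0:ℝ) < 1/(1-t)^2)]
  have hu : t = Real.exp (Real.log t) := (Real.exp_log ht0).symm
  have hv : 1 - t = Real.exp (Real.log (1-t)) := (Real.exp_log h1).symm
  generalize hU : Real.log t = u at *
  generalize hV : Real.log (1-t) = v at *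
  rw [hv]
  field_simp [Real.exp_ne_zero]
  simp only [← Real.exp_add, sq, ← Real.exp_add]
  congr 1
  ring

lemma mellin_val {s : ℝ} (hs0 : 0 < s) (hs1 : s < 1) :
    ∫ y in Ioi (0:ℝ), Real.exp ((s-1) * Real.log y) / (1+y) = π / Real.sin (π*s) := by
  rw [subst_eq]
  rw [setIntegral_congr_fun measurableSet_Ioo (fun t ht => transform_pt ht)]
  rw [← integral_Ioc_eq_integral_Ioo, ← intervalIntegral.integral_of_le (by norm_num : (0:ℝ) ≤ 1)]
  exact beta_val hs0 hs1

lemma mellin_integrable {s : ℝ} (hs0 : 0 < s) (hs1 : s < 1) :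
    IntegrableOn (fun y : ℝ => Real.exp ((s-1) * Real.log y) / (1+y)) (Ioi (0:ℝ)) := by
  rw [subst_integrable]
  apply (beta_integrable hs0 hs1).congr
  refine (ae_restrict_iff' measurableSet_Ioo).2 (.of_forall fun t ht => ?_)
  exact (transform_pt ht).symm

lemma scaled_meas {x s : ℝ} : Measurable (fun y : ℝ => Real.exp ((s-1) * Real.log y) * (x/(y+x))) :=
  ((Real.measurable_log.const_mul (s-1)).exp.mul
    (measurable_const.div ((measurable_id.add_const x))))

lemma mellin_scaled_val {x s : ℝ} (hx : 0 < x) (hs0 : 0 < s) (hs1 : s < 1) :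
    ∫ y in Ioi (0:ℝ), Real.exp ((s-1) * Real.log y) * (x/(y+x))
      = Real.exp (s * Real.log x) * (π / Real.sin (π*s)) := by
  have h := integral_comp_mul_left_Ioi
    (fun y : ℝ => Real.exp ((s-1) * Real.log y) * (x/(y+x))) 0 hx
  rw [mul_zero] at h
  have h2 : ∫ y in Ioi (0:ℝ), Real.exp ((s-1) * Real.log (x*y)) * (x/((x*y)+x))
      = ∫ y in Ioi (0:ℝ), Real.exp ((s-1) * Real.log x) * (Real.exp ((s-1) * Real.log y) / (1+y)) := by
    apply setIntegral_congr_fun measurableSet_Ioi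
    intro y hy
    have hy0 : (0:ℝ) < y := hy
    have h1y : (0:ℝ) < 1 + y := by linarith
    dsimp only
    rw [Real.log_mul hx.ne' hy0.ne', show x*y+x = x*(1+y) by ring, mul_add, Real.exp_add]
    field_simp
  rw [h2, MeasureTheory.integral_const_mul, mellin_val hs0 hs1] at h
  have hxne : x ≠ 0 := hx.ne'
  have : ∫ y in Ioi (0:ℝ), Real.exp ((s-1) * Real.log y) * (x/(y+x))
      = x * (Real.exp ((s-1) * Real.log x) * (π / Real.sin (π*s))) := by
    rw [h, smul_eq_mul, ← mul_assoc, mul_inv_cancel₀ hxne, one_mul]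
  rw [this, ← mul_assoc]
  congr 1
  nth_rewrite 1 [← Real.exp_log hx]
  rw [← Real.exp_add]
  congr 1
  ring

lemma mellin_scaled_integrable {x s : ℝ} (hx : 0 < x) (hs0 : 0 < s) (hs1 : s < 1) :
    IntegrableOn (fun y : ℝ => Real.exp ((s-1) * Real.log y) * (x/(y+x))) (Ioi (0:ℝ)) := by
  have hg : IntegrableOn (fun y : ℝ => (max 1 x) * (Real.exp ((s-1) * Real.log y) / (1+y))) (Ioi (0:ℝ)) :=
    (mellin_integrable hs0 hs1).const_mul _
  apply Integrable.mono hg scaled_meas.aestronglyMeasurable.restrict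
  refine (ae_restrict_iff' measurableSet_Ioi).2 (.of_forall fun y hy => ?_)
  have hy0 : (0:ℝ) < y := hy
  have h1y : (0:ℝ) < 1 + y := by linarith
  have he : (0:ℝ) < Real.exp ((s-1) * Real.log y) := Real.exp_pos _
  rw [Real.norm_eq_abs, Real.norm_eq_abs, abs_of_nonneg (by positivity), abs_of_nonneg (by positivity)]
  rw [show (max 1 x) * (Real.exp ((s-1)*Real.log y)/(1+y))
      = Real.exp ((s-1)*Real.log y) * ((max 1 x)/(1+y)) by ring]
  apply mul_le_mul_of_nonneg_left ?_ he.le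
  rcases le_total x 1 with hc | hc
  · calc x/(y+x) ≤ 1/(1+y) := by
          rw [div_le_div_iff₀ (by linarith) h1y]; nlinarith
      _ ≤ max 1 x / (1+y) := by
          rw [div_le_div_iff₀ (by linarith) h1y]; nlinarith [le_max_left (1:ℝ) x]
  · calc x/(y+x) ≤ x/(1+y) := by
          rw [div_le_div_iff₀ (by linarith) h1y]; nlinarith
      _ ≤ max 1 x / (1+y) := by
          rw [div_le_div_iff₀ (by linarith) h1y]; nlinarith [le_max_right (1:ℝ) x]

lemma log_ne {x : ℝ} (hx : 0 < x) (hx1 : x ≠ 1) : Real.log x ≠ 0 := by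
  intro h
  rcases Real.log_eq_zero.mp h with h | h | h <;> [exact hx.ne' h; exact hx1 h; linarith]

lemma ratio_pos {x : ℝ} (hx : 0 < x) (hx1 : x ≠ 1) : 0 < (x-1)/Real.log x := by
  rcases lt_or_gt_of_ne hx1 with h | h
  · have h1 : Real.log x < 0 := Real.log_neg hx h
    have h2 : x - 1 < 0 := by linarith
    exact div_pos_of_neg_of_neg h2 h1
  · exact div_pos (by linarith) (Real.log_pos h)

lemma fubini_key {x : ℝ} (hx : 0 < x) (hx1 : x ≠ 1) :
    ∫ y in Ioi (0:ℝ), x*(y+1)/((y+x)*y*(π^2+(Real.log y)^2)) = (x-1)/Real.log x := by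
  have hπ : (0:ℝ) < π := Real.pi_pos
  set μ := volume.restrict (Ioo (0:ℝ) 1) with hμ
  set ν := volume.restrict (Ioi (0:ℝ)) with hν
  set G : ℝ → ℝ → ℝ := fun s y => Real.sin (π*s) * (Real.exp ((s-1)*Real.log y) * (x/(y+x))) with hG
  have hGm : Measurable (Function.uncurry G) := by
    apply Measurable.mul
    · exact (Real.measurable_sin.comp ((measurable_fst).const_mul π))
    · exact ((((measurable_fst.sub measurable_const).mul
        (Real.measurable_log.comp measurable_snd))).exp.mul
        (measurable_const.div (measurable_snd.add_const x)))
  have swap : ∫⁻ s, ∫⁻ y, ENNReal.ofReal (G s y) ∂ν ∂μ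
      = ∫⁻ y, ∫⁻ s, ENNReal.ofReal (G s y) ∂μ ∂ν :=
    lintegral_lintegral_swap (hGm.ennreal_ofReal.aemeasurable)
  -- inner values on the left
  have hL : ∀ s ∈ Ioo (0:ℝ) 1, ∫⁻ y, ENNReal.ofReal (G s y) ∂ν
      = ENNReal.ofReal (π * Real.exp (s * Real.log x)) := by
    intro s hs
    have hsin : 0 < Real.sin (π*s) := by
      apply Real.sin_pos_of_pos_of_lt_pi (mul_pos hπ hs.1)
      calc π * s < π * 1 := by nlinarith [hs.2]
        _ = π := mul_one π
    rw [← ofReal_integral_eq_lintegral_ofReal]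
    · congr 1
      rw [MeasureTheory.integral_const_mul, mellin_scaled_val hx hs.1 hs.2]
      field_simp
    · exact (mellin_scaled_integrable hx hs.1 hs.2).const_mul _
    · refine (ae_restrict_iff' measurableSet_Ioi).2 (.of_forall fun y hy => ?_)
      have hy0 : (0:ℝ) < y := hy
      have : (0:ℝ) ≤ x/(y+x) := by positivity
      exact mul_nonneg hsin.le (mul_nonneg (Real.exp_pos _).le this)
  -- left side total
  have hLtot : ∫⁻ s, ∫⁻ y, ENNReal.ofReal (G s y) ∂ν ∂μ
      = ENNReal.ofReal (π * ((x-1)/Real.log x)) := by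
    rw [lintegral_congr_ae ((ae_restrict_iff' measurableSet_Ioo).2 (.of_forall hL))]
    rw [← ofReal_integral_eq_lintegral_ofReal]
    · congr 1
      rw [← integral_Ioc_eq_integral_Ioo,
        ← intervalIntegral.integral_of_le (by norm_num : (0:ℝ) ≤ 1)]
      rw [show (fun s : ℝ => π * Real.exp (s * Real.log x))
          = (fun s : ℝ => π * Real.exp (Real.log x * s)) by funext s; rw [mul_comm s]]
      rw [intervalIntegral.integral_const_mul, exp_int _ (log_ne hx hx1), Real.exp_log hx]
    · apply Integrable.const_mul
      apply (Continuous.integrableOn_Ioc ?_).mono_set Ioo_subset_Ioc_self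
      exact (Real.continuous_exp.comp (continuous_id.mul continuous_const))
    · exact .of_forall fun s => by positivity
  -- inner values on the right
  have hR : ∀ y ∈ Ioi (0:ℝ), ∫⁻ s, ENNReal.ofReal (G s y) ∂μ
      = ENNReal.ofReal (π * (x*(y+1)/((y+x)*y*(π^2+(Real.log y)^2)))) := by
    intro y hy
    have hy0 : (0:ℝ) < y := hy
    set c := Real.log y with hc
    rw [← ofReal_integral_eq_lintegral_ofReal]
    · congr 1
      have hGs : ∀ s : ℝ, G s y = (x/(y+x) * Real.exp (-c)) * (Real.sin (π*s) * Real.exp (c*s)) := by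
        intro s
        rw [hG]
        simp only
        rw [show (s-1)*c = c*s + (-c) by ring, Real.exp_add]
        ring
      rw [show (fun s => G s y) = fun s => (x/(y+x) * Real.exp (-c)) * (Real.sin (π*s) * Real.exp (c*s)) from funext hGs]
      rw [← integral_Ioc_eq_integral_Ioo,
        ← intervalIntegral.integral_of_le (by norm_num : (0:ℝ) ≤ 1),
        intervalIntegral.integral_const_mul, sin_exp_int c]
      rw [Real.exp_neg, Real.exp_log hy0]
      field_simp
    · apply (Continuous.integrableOn_Ioc ?_).mono_set Ioo_subset_Ioc_self
      exact (Real.continuous_sin.comp (continuous_const.mul continuous_id)).mul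
        ((((continuous_id.sub continuous_const).mul continuous_const)).rexp.mul continuous_const)
    · refine (ae_restrict_iff' measurableSet_Ioo).2 (.of_forall fun s hs => ?_)
      have hsin : 0 ≤ Real.sin (π*s) := by
        apply Real.sin_nonneg_of_nonneg_of_le_pi (by nlinarith [hs.1]) (by nlinarith [hs.2])
      have : (0:ℝ) ≤ x/(y+x) := by positivity
      exact mul_nonneg hsin (mul_nonneg (Real.exp_pos _).le this)
  -- conclude
  set h : ℝ → ℝ := fun y => x*(y+1)/((y+x)*y*(π^2+(Real.log y)^2)) with hh
  have hhm : Measurable h := by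
    apply Measurable.div
    · exact measurable_const.mul (measurable_id.add_const 1)
    · exact ((measurable_id.add_const x).mul measurable_id).mul
        (measurable_const.add (Real.measurable_log.pow_const 2))
  have hRtot : ∫⁻ y, ENNReal.ofReal (π * h y) ∂ν = ENNReal.ofReal (π * ((x-1)/Real.log x)) := by
    rw [← hLtot, swap]
    apply lintegral_congr_ae
    exact (ae_restrict_iff' measurableSet_Ioi).2 (.of_forall fun y hy => (hR y hy).symm)
  have hpos : ∀ y ∈ Ioi (0:ℝ), 0 ≤ π * h y := by
    intro y hy
    have hy0 : (0:ℝ) < y := hy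
    have : 0 < (y+x)*y*(π^2+(Real.log y)^2) := by positivity
    positivity
  have hnn : 0 ≤ᵐ[ν] fun y => π * h y :=
    (ae_restrict_iff' measurableSet_Ioi).2 (.of_forall hpos)
  have hint : Integrable (fun y => π * h y) ν := by
    refine ⟨((hhm.const_mul π).aestronglyMeasurable.restrict), ?_⟩
    rw [hasFiniteIntegral_iff_ofReal hnn, hRtot]
    exact ENNReal.ofReal_lt_top
  have : ∫ y, π * h y ∂ν = π * ((x-1)/Real.log x) := by
    rw [integral_eq_lintegral_of_nonneg_ae hnn hint.aestronglyMeasurable, hRtot,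
      ENNReal.toReal_ofReal (mul_nonneg hπ.le (ratio_pos hx hx1).le)]
  rw [MeasureTheory.integral_const_mul] at this
  have := mul_left_cancel₀ hπ.ne' this
  exact this
end Stmt9Helpers

open Stmt9Helpers Set in
theorem stmt9 (x : ℝ) (hx : 0 < x) (hx1 : x ≠ 1) :
    (x - 1) / Real.log x =
      ∫ t in (0 : ℝ)..1, (x / ((1 - t) * x + t)) *
        (1 / (t * (1 - t) * (π ^ 2 + Real.log (t / (1 - t)) ^ 2))) := by
  rw [intervalIntegral.integral_of_le (by norm_num : (0:ℝ) ≤ 1), integral_Ioc_eq_integral_Ioo]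
  rw [show (fun t : ℝ => (x / ((1 - t) * x + t)) *
        (1 / (t * (1 - t) * (π ^ 2 + Real.log (t / (1 - t)) ^ 2)))) =
      (fun t : ℝ => (x / ((1 - t) * x + t)) *
        (1 / (t * (1 - t) * (π ^ 2 + Real.log (t / (1 - t)) ^ 2)))) from rfl]
  have key := fubini_key hx hx1
  rw [subst_eq (fun y => x*(y+1)/((y+x)*y*(π^2+(Real.log y)^2)))] at key
  rw [← key]
  apply setIntegral_congr_fun measurableSet_Ioo
  intro t ht
  obtain ⟨ht0, ht1⟩ := ht
  have h1 : (0:ℝ) < 1 - t := by linarith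
  have hphi : phi t = t/(1-t) := rfl
  dsimp only
  rw [hphi]
  have hden : (0:ℝ) < π^2 + Real.log (t/(1-t))^2 := by positivity
  have hd2 : (0:ℝ) < (1-t)*x + t := by positivity
  have habs : |1/(1-t)^2| = 1/(1-t)^2 := abs_of_pos (by positivity)
  rw [habs]
  have e1 : t/(1-t) + x = ((1-t)*x + t)/(1-t) := by field_simp; ring
  have e2 : t/(1-t) + 1 = 1/(1-t) := by field_simp; ring
  rw [e1, e2]
  field_simp
end

section
/- For every x ∈ (0,∞) with x ≠ 1, (x·log(x))/(x-1) = ∫_{0}^{1} x/((1-t)·x + t) dt; that is, the associated measure of the operator monotone function x ↦ x·log(x)/(x-1) is Lebesgue measure on [0,1]. -/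
open MeasureTheory Real

theorem stmt10 (x : ℝ) (hx : 0 < x) (hx1 : x ≠ 1) :
    x * Real.log x / (x - 1) = ∫ t in (0 : ℝ)..1, x / ((1 - t) * x + t) := by
  have hx1' : (1 : ℝ) - x ≠ 0 := by
    intro h; apply hx1; linarith
  have hpos : ∀ t ∈ Set.uIcc (0:ℝ) 1, 0 < (1 - t) * x + t := by
    intro t ht
    rw [Set.uIcc_of_le (by norm_num : (0:ℝ) ≤ 1)] at ht
    obtain ⟨h0, h1⟩ := ht
    rcases eq_or_lt_of_le h0 with h | h
    · simp [← h, hx]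
    · have : 0 ≤ (1 - t) * x := mul_nonneg (by linarith) hx.le
      linarith
  have hderiv : ∀ t ∈ Set.uIcc (0:ℝ) 1,
      HasDerivAt (fun t => Real.log ((1 - t) * x + t) * (x / (1 - x)))
        (x / ((1 - t) * x + t)) t := by
    intro t ht
    have hg : HasDerivAt (fun t : ℝ => (1 - t) * x + t) (1 - x) t := by
      have h : HasDerivAt (fun t : ℝ => (1 - t) * x + t) ((0 - 1) * x + 1) t :=
        (((hasDerivAt_const t (1:ℝ)).sub (hasDerivAt_id t)).mul_const x).add
          (hasDerivAt_id t)
      convert h using 1; ring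
    have hlog := (hg.log (ne_of_gt (hpos t ht))).mul_const (x / (1 - x))
    have key : x / ((1 - t) * x + t) = (1 - x) / ((1 - t) * x + t) * (x / (1 - x)) := by
      rw [div_mul_div_comm, mul_comm (1 - x) x,
        mul_div_mul_right _ _ hx1']
    rw [key]; exact hlog
  have hcont : IntervalIntegrable (fun t => x / ((1 - t) * x + t)) volume 0 1 := by
    apply ContinuousOn.intervalIntegrable
    exact continuousOn_const.div
      (by fun_prop)
      (fun t ht => ne_of_gt (hpos t ht))
  rw [intervalIntegral.integral_eq_sub_of_hasDerivAt hderiv hcont]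
  simp only [sub_zero, mul_one, one_mul, sub_self, zero_mul, zero_add]
  rw [Real.log_one, zero_mul, zero_sub, div_eq_iff (sub_ne_zero.mpr hx1)]
  field_simp
  ring
end

section
/- A continuous function f : [0,∞) → [0,∞) is operator monotone if and only if it is operator concave. -/
open MeasureTheory Real ComplexOrder

/-- `f` is operator monotone on `[0,∞)`: for all `n` and all positive semidefinite complex
`n × n` matrices `A ≤ B` (Loewner order), `f(A) ≤ f(B)` via the continuous functional
calculus. -/
def OperatorMonotone (f : ℝ → ℝ) : Prop :=
  ∀ (n : ℕ) (A B : Matrix (Fin n) (Fin n) ℂ),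
    A.PosSemidef → B.PosSemidef → (B - A).PosSemidef →
    (cfc f B - cfc f A).PosSemidef

/-- `f` is operator concave on `[0,∞)`: for all `n`, all positive semidefinite complex
`n × n` matrices `A, B` and all `s ∈ [0,1]`,
`f(s•A + (1-s)•B) ≥ s•f(A) + (1-s)•f(B)` in the Loewner order. -/
def OperatorConcave (f : ℝ → ℝ) : Prop :=
  ∀ (n : ℕ) (A B : Matrix (Fin n) (Fin n) ℂ),
    A.PosSemidef → B.PosSemidef → ∀ s : ℝ, s ∈ Set.Icc (0 : ℝ) 1 →
    (cfc f (s • A + (1 - s) • B) - (s • cfc f A + (1 - s) • cfc f B)).PosSemidef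

namespace OpMonAux
open Matrix Polynomial ComplexOrder

variable {m : Type*} [Fintype m] [DecidableEq m]

/-- Conjugation by a unitary matrix as an `ℝ`-algebra homomorphism. -/
noncomputable def conjAlgHom (U : Matrix m m ℂ) (h1 : U * Uᴴ = 1) (h2 : Uᴴ * U = 1) :
    Matrix m m ℂ →ₐ[ℝ] Matrix m m ℂ where
  toFun M := U * M * Uᴴ
  map_one' := by show U * 1 * Uᴴ = 1; rw [mul_one, h1]
  map_mul' M N := by
    show U * (M * N) * Uᴴ = (U * M * Uᴴ) * (U * N * Uᴴ)
    rw [show (U * M * Uᴴ) * (U * N * Uᴴ) = U * M * (Uᴴ * U) * (N * Uᴴ) by noncomm_ring, h2,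
      mul_one]
    noncomm_ring
  map_zero' := by show U * 0 * Uᴴ = 0; simp
  map_add' M N := by show U * (M + N) * Uᴴ = _; noncomm_ring
  commutes' r := by
    show U * algebraMap ℝ (Matrix m m ℂ) r * Uᴴ = _
    rw [Algebra.algebraMap_eq_smul_one, mul_smul_comm, mul_one, smul_mul_assoc, h1]

lemma aeval_unitary_diag (U : Matrix m m ℂ) (h1 : U * Uᴴ = 1) (h2 : Uᴴ * U = 1) (μ : m → ℝ)
    (p : ℝ[X]) :
    Polynomial.aeval (U * diagonal (Complex.ofReal ∘ μ) * Uᴴ) p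
      = U * diagonal (Complex.ofReal ∘ (fun x => Polynomial.eval x p) ∘ μ) * Uᴴ := by
  have key : aeval (Complex.ofReal ∘ μ) p = Complex.ofReal ∘ (fun x => eval x p) ∘ μ := by
    funext i
    have h3 : aeval (Complex.ofReal ∘ μ) p i = aeval ((Complex.ofReal ∘ μ) i) p :=
      (aeval_algHom_apply (Pi.evalAlgHom ℝ (fun _ => ℂ) i) _ p).symm
    have h4 : aeval ((μ i : ℝ) : ℂ) p = ((eval (μ i) p : ℝ) : ℂ) := by
      rw [show ((μ i : ℝ) : ℂ) = algebraMap ℝ ℂ (μ i) from rfl, aeval_algebraMap_apply]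
      norm_cast
    simp only [h3, Function.comp_apply, h4]
  rw [show U * diagonal (Complex.ofReal ∘ μ) * Uᴴ
      = conjAlgHom U h1 h2 (diagonalAlgHom ℝ (Complex.ofReal ∘ μ)) from rfl,
    aeval_algHom_apply, aeval_algHom_apply, key]
  rfl

lemma cfc_unitary_diag (f : ℝ → ℝ) (U : Matrix m m ℂ) (h1 : U * Uᴴ = 1) (h2 : Uᴴ * U = 1)
    (μ : m → ℝ) :
    cfc f (U * diagonal (Complex.ofReal ∘ μ) * Uᴴ) = U * diagonal (Complex.ofReal ∘ f ∘ μ) * Uᴴ := by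
  set D : Matrix m m ℂ := diagonal (Complex.ofReal ∘ μ) with hD
  set M : Matrix m m ℂ := U * D * Uᴴ with hM
  have hDh : Dᴴ = D := by
    have hst : star (Complex.ofReal ∘ μ) = Complex.ofReal ∘ μ := by
      funext i; simp [Pi.star_def]
    rw [hD, diagonal_conjTranspose, hst]
  have hsa : _root_.IsSelfAdjoint M := by
    show star M = M
    rw [hM, star_eq_conjTranspose]
    simp only [conjTranspose_mul, conjTranspose_conjTranspose, hDh]
    rw [mul_assoc]
  have hu : U ∈ unitary (Matrix m m ℂ) := by
    rw [Unitary.mem_iff, star_eq_conjTranspose]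
    exact ⟨h2, h1⟩
  have hspec : spectrum ℝ M ⊆ Set.range μ := by
    have he : M = (⟨U, hu⟩ : unitary (Matrix m m ℂ)) * D *
        star ((⟨U, hu⟩ : unitary (Matrix m m ℂ)) : Matrix m m ℂ) := by
      rw [hM, star_eq_conjTranspose]
    rw [he, Unitary.spectrum_star_right_conjugate]
    intro x hx
    have : (algebraMap ℝ ℂ) x ∈ spectrum ℂ D := by
      rw [spectrum.algebraMap_mem_iff]; exact hx
    rw [hD, spectrum_diagonal] at this
    obtain ⟨i, hi⟩ := this
    exact ⟨i, Complex.ofReal_injective (by simpa using hi)⟩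
  set s : Finset ℝ := Finset.image μ Finset.univ with hs
  set p : ℝ[X] := Lagrange.interpolate s id f with hp
  have hnode : ∀ x ∈ s, eval x p = f x := by
    intro x hx
    have := Lagrange.eval_interpolate_at_node f (Set.injOn_id _) hx
    simpa [hp] using this
  have h1' : cfc f M = cfc (fun x => eval x p) M := by
    refine cfc_congr fun x hx => ?_
    obtain ⟨i, rfl⟩ := hspec hx
    exact (hnode (μ i) (by simp [hs])).symm
  rw [h1', cfc_polynomial p M hsa, hM, aeval_unitary_diag U h1 h2 μ p]
  have : Complex.ofReal ∘ (fun x => eval x p) ∘ μ = Complex.ofReal ∘ f ∘ μ := by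
    funext i
    simp [hnode (μ i) (by simp [hs])]
  rw [this]

lemma exists_unitary_diag {M : Matrix m m ℂ} (hM : M.IsHermitian) :
    ∃ (U : Matrix m m ℂ) (μ : m → ℝ), U * Uᴴ = 1 ∧ Uᴴ * U = 1 ∧
      Set.range μ = spectrum ℝ M ∧
      M = U * diagonal (Complex.ofReal ∘ μ) * Uᴴ := by
  refine ⟨hM.eigenvectorUnitary, hM.eigenvalues, ?_, ?_,
    (hM.spectrum_real_eq_range_eigenvalues).symm, ?_⟩
  · rw [← star_eq_conjTranspose]; exact hM.eigenvectorUnitary.2.2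
  · rw [← star_eq_conjTranspose]; exact hM.eigenvectorUnitary.2.1
  · rw [← star_eq_conjTranspose]; exact hM.spectral_theorem

lemma isHermitian_cfc {M : Matrix m m ℂ} (hM : M.IsHermitian) (f : ℝ → ℝ) :
    (cfc f M).IsHermitian := by
  obtain ⟨U, μ, h1, h2, -, hdec⟩ := exists_unitary_diag hM
  rw [hdec, cfc_unitary_diag f U h1 h2 μ]
  have hst : star (Complex.ofReal ∘ f ∘ μ) = Complex.ofReal ∘ f ∘ μ := by
    funext i; simp [Pi.star_def]
  show _ = _
  simp only [conjTranspose_mul, conjTranspose_conjTranspose, diagonal_conjTranspose, hst]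
  rw [mul_assoc]

lemma cfc_sub_poly {S : Matrix m m ℂ} (hS : S.IsHermitian) (f : ℝ → ℝ) (p : ℝ[X]) :
    cfc f S - Polynomial.aeval S p = cfc (fun x => f x - Polynomial.eval x p) S := by
  obtain ⟨U, μ, h1, h2, -, hdec⟩ := exists_unitary_diag hS
  have harg : (fun i => (Complex.ofReal ∘ f ∘ μ) i
        - (Complex.ofReal ∘ (fun x => Polynomial.eval x p) ∘ μ) i)
      = Complex.ofReal ∘ (fun x => f x - Polynomial.eval x p) ∘ μ := by
    funext i
    simp [Function.comp]
  rw [hdec, cfc_unitary_diag f U h1 h2 μ, aeval_unitary_diag U h1 h2 μ p,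
    cfc_unitary_diag _ U h1 h2 μ, ← Matrix.sub_mul, ← Matrix.mul_sub, diagonal_sub, harg]

lemma posSemidef_cfc {M : Matrix m m ℂ} (hM : M.PosSemidef) (f : ℝ → ℝ)
    (hf : ∀ x : ℝ, 0 ≤ x → 0 ≤ f x) : (cfc f M).PosSemidef := by
  obtain ⟨U, μ, h1, h2, hsp, hdec⟩ := exists_unitary_diag hM.isHermitian
  rw [hdec, cfc_unitary_diag f U h1 h2 μ]
  have : (diagonal (Complex.ofReal ∘ f ∘ μ)).PosSemidef := by
    rw [posSemidef_diagonal_iff]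
    intro i
    have hμ : 0 ≤ μ i := by
      have : μ i ∈ spectrum ℝ M := hsp ▸ Set.mem_range_self i
      rw [hM.isHermitian.spectrum_real_eq_range_eigenvalues] at this
      obtain ⟨j, hj⟩ := this
      exact hj ▸ hM.eigenvalues_nonneg j
    exact Complex.zero_le_real.mpr (hf _ hμ)
  simpa using this.mul_mul_conjTranspose_same U

lemma cfc_conj_unitary (f : ℝ → ℝ) {M V : Matrix m m ℂ} (hM : M.IsHermitian)
    (hV1 : V * Vᴴ = 1) (hV2 : Vᴴ * V = 1) :
    cfc f (V * M * Vᴴ) = V * cfc f M * Vᴴ := by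
  obtain ⟨U, μ, h1, h2, -, hdec⟩ := exists_unitary_diag hM
  have e1 : (V * U) * (V * U)ᴴ = 1 := by
    rw [conjTranspose_mul, show V * U * (Uᴴ * Vᴴ) = V * (U * Uᴴ) * Vᴴ by noncomm_ring, h1,
      mul_one, hV1]
  have e2 : (V * U)ᴴ * (V * U) = 1 := by
    rw [conjTranspose_mul, show Uᴴ * Vᴴ * (V * U) = Uᴴ * (Vᴴ * V) * U by noncomm_ring, hV2,
      mul_one, h2]
  have hVMV : V * M * Vᴴ = (V * U) * diagonal (Complex.ofReal ∘ μ) * (V * U)ᴴ := by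
    rw [hdec, conjTranspose_mul]; noncomm_ring
  rw [hVMV, cfc_unitary_diag f _ e1 e2 μ, hdec, cfc_unitary_diag f U h1 h2 μ,
    conjTranspose_mul]
  noncomm_ring

lemma cfc_submatrix_equiv {l : Type*} [Fintype l] [DecidableEq l] (f : ℝ → ℝ)
    {M : Matrix m m ℂ} (hM : M.IsHermitian) (e : l ≃ m) :
    cfc f (M.submatrix e e) = (cfc f M).submatrix e e := by
  obtain ⟨U, μ, h1, h2, -, hdec⟩ := exists_unitary_diag hM
  have key : ∀ (X Y : Matrix m m ℂ),
      X.submatrix ⇑e ⇑e * Y.submatrix ⇑e ⇑e = (X * Y).submatrix ⇑e ⇑e :=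
    fun X Y => submatrix_mul_equiv X Y ⇑e e ⇑e
  have hU1 : U.submatrix ⇑e ⇑e * (U.submatrix ⇑e ⇑e)ᴴ = 1 := by
    rw [conjTranspose_submatrix, key, h1, submatrix_one_equiv]
  have hU2 : (U.submatrix ⇑e ⇑e)ᴴ * U.submatrix ⇑e ⇑e = 1 := by
    rw [conjTranspose_submatrix, key, h2, submatrix_one_equiv]
  have hsub : M.submatrix ⇑e ⇑e =
      U.submatrix ⇑e ⇑e * diagonal (Complex.ofReal ∘ (μ ∘ ⇑e)) * (U.submatrix ⇑e ⇑e)ᴴ := by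
    rw [hdec, show Complex.ofReal ∘ (μ ∘ ⇑e) = (Complex.ofReal ∘ μ) ∘ ⇑e from rfl,
      ← submatrix_diagonal_equiv (Complex.ofReal ∘ μ) e, conjTranspose_submatrix, key, key]
  rw [hsub, cfc_unitary_diag f _ hU1 hU2 (μ ∘ ⇑e), hdec, cfc_unitary_diag f U h1 h2 μ,
    show Complex.ofReal ∘ f ∘ (μ ∘ ⇑e) = (Complex.ofReal ∘ f ∘ μ) ∘ ⇑e from rfl,
    ← submatrix_diagonal_equiv (Complex.ofReal ∘ f ∘ μ) e, conjTranspose_submatrix, key, key]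

lemma cfc_fromBlocks {A B : Matrix m m ℂ} (hA : A.IsHermitian) (hB : B.IsHermitian) (f : ℝ → ℝ) :
    cfc f (fromBlocks A 0 0 B) = fromBlocks (cfc f A) 0 0 (cfc f B) := by
  obtain ⟨U, μ, h1, h2, -, hdec⟩ := exists_unitary_diag hA
  obtain ⟨V, ν, g1, g2, -, gdec⟩ := exists_unitary_diag hB
  set W : Matrix (m ⊕ m) (m ⊕ m) ℂ := fromBlocks U 0 0 V with hW
  have hW1 : W * Wᴴ = 1 := by
    rw [hW, fromBlocks_conjTranspose, fromBlocks_multiply]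
    simp [h1, g1, fromBlocks_one]
  have hW2 : Wᴴ * W = 1 := by
    rw [hW, fromBlocks_conjTranspose, fromBlocks_multiply]
    simp [h2, g2, fromBlocks_one]
  have hcomp : Complex.ofReal ∘ Sum.elim μ ν = Sum.elim (Complex.ofReal ∘ μ) (Complex.ofReal ∘ ν) := by
    funext i; cases i <;> rfl
  have hcompf : Complex.ofReal ∘ f ∘ Sum.elim μ ν =
      Sum.elim (Complex.ofReal ∘ f ∘ μ) (Complex.ofReal ∘ f ∘ ν) := by
    funext i; cases i <;> rfl
  have hblock : fromBlocks A 0 0 B = W * diagonal (Complex.ofReal ∘ Sum.elim μ ν) * Wᴴ := by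
    rw [hcomp, ← fromBlocks_diagonal, hW, fromBlocks_conjTranspose, fromBlocks_multiply,
      fromBlocks_multiply]
    simp [hdec, gdec]
  rw [hblock, cfc_unitary_diag f W hW1 hW2 _, hcompf, ← fromBlocks_diagonal, hW,
    fromBlocks_conjTranspose, fromBlocks_multiply, fromBlocks_multiply]
  simp [hdec, gdec, cfc_unitary_diag f U h1 h2 μ, cfc_unitary_diag f V g1 g2 ν]


lemma quadform_single (M : Matrix m m ℂ) (i : m) :
    star (Pi.single i 1) ⬝ᵥ M *ᵥ Pi.single i 1 = M i i := by
  rw [mulVec_single, dotProduct]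
  simp [Pi.single_apply, apply_ite]

lemma quadform_conj {M : Matrix m m ℂ} (hM : M.IsHermitian) (v : m → ℂ) :
    star (star v ⬝ᵥ M *ᵥ v) = star v ⬝ᵥ M *ᵥ v := by
  nth_rewrite 1 [star_dotProduct]
  rw [star_star, star_mulVec, ← dotProduct_mulVec, hM.eq]

lemma quadform_re_nonneg {M : Matrix m m ℂ} (hM : M.PosSemidef) (v : m → ℂ) :
    0 ≤ (star v ⬝ᵥ M *ᵥ v).re := by
  have := (Complex.le_def.mp (hM.dotProduct_mulVec_nonneg v)).1
  simpa using this

lemma posSemidef_of_quadform {M : Matrix m m ℂ} (hh : M.IsHermitian)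
    (h : ∀ v : m → ℂ, 0 ≤ (star v ⬝ᵥ M *ᵥ v).re) : M.PosSemidef := by
  refine PosSemidef.of_dotProduct_mulVec_nonneg hh fun v => ?_
  rw [Complex.le_def]
  have him := congrArg Complex.im (quadform_conj hh v)
  rw [Complex.star_def, Complex.conj_im] at him
  constructor
  · simpa using h v
  · simp only [Complex.zero_im]
    linarith

lemma re_trace_nonneg {M : Matrix m m ℂ} (hM : M.PosSemidef) : 0 ≤ M.trace.re := by
  have htr : M.trace = ∑ i, M i i := rfl
  rw [htr, Complex.re_sum]
  refine Finset.sum_nonneg fun i _ => ?_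
  have := quadform_re_nonneg hM (Pi.single i 1)
  rwa [quadform_single] at this

/-- spectrum of `Q` with `0 ≤ Q ≤ P` is contained in `[0, re (tr P)]`. -/
lemma spectrum_subset_Icc {Q P : Matrix m m ℂ} (hQ : Q.PosSemidef)
    (hPQ : (P - Q).PosSemidef) : spectrum ℝ Q ⊆ Set.Icc 0 P.trace.re := by
  obtain ⟨U, μ, h1, h2, hsp, hdec⟩ := exists_unitary_diag hQ.isHermitian
  have hμ0 : ∀ i, 0 ≤ μ i := by
    intro i
    have : μ i ∈ spectrum ℝ Q := hsp ▸ Set.mem_range_self i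
    rw [hQ.isHermitian.spectrum_real_eq_range_eigenvalues] at this
    obtain ⟨j, hj⟩ := this
    exact hj ▸ hQ.eigenvalues_nonneg j
  have htr : Q.trace.re = ∑ i, μ i := by
    rw [hdec, Matrix.trace_mul_comm, ← mul_assoc, h2, one_mul, Matrix.trace_diagonal]
    rw [Complex.re_sum]
    simp
  intro x hx
  rw [← hsp] at hx
  obtain ⟨j, rfl⟩ := hx
  refine ⟨hμ0 j, ?_⟩
  have h3 : μ j ≤ ∑ i, μ i :=
    Finset.single_le_sum (fun i _ => hμ0 i) (Finset.mem_univ j)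
  have h4 : Q.trace.re ≤ P.trace.re := by
    have : P.trace = Q.trace + (P - Q).trace := by rw [← Matrix.trace_add, add_sub_cancel]
    rw [this, Complex.add_re]
    have := re_trace_nonneg hPQ
    linarith
  rw [htr] at h4
  linarith

lemma posSemidef_fromBlocks_diag {A B : Matrix m m ℂ} (hA : A.PosSemidef) (hB : B.PosSemidef) :
    (fromBlocks A 0 0 B).PosSemidef := by
  obtain ⟨X, hX⟩ : ∃ X : Matrix m m ℂ, A = Xᴴ * X := by
    open scoped MatrixOrder in exact CStarAlgebra.nonneg_iff_eq_star_mul_self.mp hA.nonneg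
  obtain ⟨Y, hY⟩ : ∃ Y : Matrix m m ℂ, B = Yᴴ * Y := by
    open scoped MatrixOrder in exact CStarAlgebra.nonneg_iff_eq_star_mul_self.mp hB.nonneg
  have : fromBlocks A 0 0 B = (fromBlocks X 0 0 Y)ᴴ * fromBlocks X 0 0 Y := by
    rw [fromBlocks_conjTranspose, fromBlocks_multiply]
    simp [hX, hY]
  rw [this]
  exact posSemidef_conjTranspose_mul_self _

/-- The key positive-semidefinite witness:
`fromBlocks (t⁻¹ • R Rᴴ) (-R) (-Rᴴ) (t • 1) ⪰ 0` for `t > 0`. -/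
lemma witness_psd (R : Matrix m m ℂ) {t : ℝ} (ht : 0 < t) :
    (fromBlocks ((t : ℂ)⁻¹ • (R * Rᴴ)) (-R) (-Rᴴ) ((t : ℂ) • 1) :
      Matrix (m ⊕ m) (m ⊕ m) ℂ).PosSemidef := by
  set c : ℂ := (Real.sqrt t : ℂ) with hc
  have hcc : c * c = (t : ℂ) := by
    rw [hc]
    norm_cast
    exact Real.mul_self_sqrt ht.le
  have hc0 : c ≠ 0 := by
    rw [hc]
    norm_cast
    exact (Real.sqrt_pos.mpr ht).ne'
  have hcstar : star c = c := by
    rw [hc, Complex.star_def, Complex.conj_ofReal]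
  have hstarc : star c⁻¹ = c⁻¹ := by rw [star_inv₀, hcstar]
  set B : Matrix (m ⊕ m) (m ⊕ m) ℂ := fromBlocks (c⁻¹ • Rᴴ) (-(c • 1)) 0 0 with hB
  have h11 : (c⁻¹ • Rᴴ)ᴴ * (c⁻¹ • Rᴴ) = (t : ℂ)⁻¹ • (R * Rᴴ) := by
    rw [conjTranspose_smul, conjTranspose_conjTranspose, hstarc, smul_mul_smul_comm,
      ← mul_inv, hcc]
  have h12 : (c⁻¹ • Rᴴ)ᴴ * (-(c • 1)) = -R := by
    rw [conjTranspose_smul, conjTranspose_conjTranspose, hstarc, Matrix.mul_neg,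
      smul_mul_smul_comm, inv_mul_cancel₀ hc0, one_smul, Matrix.mul_one]
  have h21 : (-(c • 1))ᴴ * (c⁻¹ • Rᴴ) = -Rᴴ := by
    rw [conjTranspose_neg, conjTranspose_smul, conjTranspose_one, hcstar, Matrix.neg_mul,
      smul_mul_smul_comm, mul_inv_cancel₀ hc0, one_smul, Matrix.one_mul]
  have h22 : (-(c • (1 : Matrix m m ℂ)))ᴴ * (-(c • (1 : Matrix m m ℂ))) =
      (t : ℂ) • (1 : Matrix m m ℂ) := by
    rw [conjTranspose_neg, conjTranspose_smul, conjTranspose_one, hcstar]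
    rw [Matrix.neg_mul, Matrix.mul_neg, neg_neg, smul_mul_smul_comm, hcc, Matrix.one_mul]
  have hBsq : Bᴴ * B = fromBlocks ((t : ℂ)⁻¹ • (R * Rᴴ)) (-R) (-Rᴴ) ((t : ℂ) • 1) := by
    rw [hB, fromBlocks_conjTranspose, fromBlocks_multiply]
    simp only [conjTranspose_zero, Matrix.zero_mul, Matrix.mul_zero, add_zero,
      h11, h12, h21, h22]
  rw [← hBsq]
  exact posSemidef_conjTranspose_mul_self B

lemma psd_smul_real {P : Matrix m m ℂ} (hP : P.PosSemidef) {r : ℝ} (hr : 0 ≤ r) :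
    ((r : ℂ) • P).PosSemidef := by
  refine PosSemidef.of_dotProduct_mulVec_nonneg ?_ fun v => ?_
  · show _ = _
    rw [conjTranspose_smul, Complex.star_def, Complex.conj_ofReal, hP.isHermitian.eq]
  · rw [smul_mulVec, dotProduct_smul, smul_eq_mul]
    exact mul_nonneg (Complex.zero_le_real.mpr hr) (hP.dotProduct_mulVec_nonneg v)

lemma quad_sub (S T : Matrix m m ℂ) (v : m → ℂ) :
    star v ⬝ᵥ (S - T) *ᵥ v = star v ⬝ᵥ S *ᵥ v - star v ⬝ᵥ T *ᵥ v := by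
  rw [sub_mulVec, dotProduct_sub]

lemma conj_mul_self (z : ℂ) : star z * z = (Complex.normSq z : ℂ) := by
  rw [Complex.star_def, mul_comm, Complex.mul_conj]

lemma dot_self_re_nonneg (v : m → ℂ) : 0 ≤ (star v ⬝ᵥ v).re := by
  rw [dotProduct, Complex.re_sum]
  refine Finset.sum_nonneg fun i _ => ?_
  rw [Pi.star_apply, conj_mul_self]
  simpa using Complex.normSq_nonneg (v i)

lemma quadform_cfc_bound {S : Matrix m m ℂ} (hS : S.IsHermitian) {g : ℝ → ℝ} {δ : ℝ}
    (hg : ∀ x ∈ spectrum ℝ S, |g x| ≤ δ) (v : m → ℂ) :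
    |(star v ⬝ᵥ (cfc g S) *ᵥ v).re| ≤ δ * (star v ⬝ᵥ v).re := by
  obtain ⟨U, μ, h1, h2, hsp, hdec⟩ := exists_unitary_diag hS
  have hgb : ∀ i, |g (μ i)| ≤ δ := fun i => hg (μ i) (hsp ▸ Set.mem_range_self i)
  rw [hdec, cfc_unitary_diag g U h1 h2 μ]
  set w : m → ℂ := Uᴴ *ᵥ v with hw
  have hsw : star v ᵥ* U = star w := by
    rw [hw, star_mulVec, conjTranspose_conjTranspose]
  have hquad : star v ⬝ᵥ (U * diagonal (Complex.ofReal ∘ g ∘ μ) * Uᴴ) *ᵥ v =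
      star w ⬝ᵥ diagonal (Complex.ofReal ∘ g ∘ μ) *ᵥ w := by
    rw [← mulVec_mulVec, ← mulVec_mulVec, dotProduct_mulVec, hsw, ← hw]
  have hdot : star w ⬝ᵥ diagonal (Complex.ofReal ∘ g ∘ μ) *ᵥ w =
      ∑ i, ((g (μ i) : ℂ) * (Complex.normSq (w i) : ℂ)) := by
    rw [dotProduct]
    refine Finset.sum_congr rfl fun i _ => ?_
    simp only [mulVec_diagonal, Pi.star_apply, Function.comp_apply]
    rw [show star (w i) * ((g (μ i) : ℂ) * w i)
      = (g (μ i) : ℂ) * (star (w i) * w i) from by ring, conj_mul_self]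
  have hvw : star v ⬝ᵥ v = ∑ i, (Complex.normSq (w i) : ℂ) := by
    calc star v ⬝ᵥ v = star v ⬝ᵥ (U * Uᴴ) *ᵥ v := by rw [h1, one_mulVec]
    _ = star w ⬝ᵥ w := by
        rw [← mulVec_mulVec, dotProduct_mulVec, hsw, ← hw]
    _ = ∑ i, (Complex.normSq (w i) : ℂ) := by
        rw [dotProduct]
        refine Finset.sum_congr rfl fun i _ => ?_
        rw [Pi.star_apply, conj_mul_self]
  rw [hquad, hdot, hvw]
  have hre1 : (∑ i, ((g (μ i) : ℂ) * (Complex.normSq (w i) : ℂ))).re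
      = ∑ i, g (μ i) * Complex.normSq (w i) := by
    rw [Complex.re_sum]
    refine Finset.sum_congr rfl fun i _ => ?_
    norm_cast
  have hre2 : (∑ i, (Complex.normSq (w i) : ℂ)).re = ∑ i, Complex.normSq (w i) := by
    rw [Complex.re_sum]
    refine Finset.sum_congr rfl fun i _ => ?_
    norm_cast
  rw [hre1, hre2, Finset.mul_sum]
  refine (Finset.abs_sum_le_sum_abs _ _).trans (Finset.sum_le_sum fun i _ => ?_)
  rw [abs_mul, abs_of_nonneg (Complex.normSq_nonneg _)]
  exact mul_le_mul_of_nonneg_right (hgb i) (Complex.normSq_nonneg _)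

lemma psd_limit {f : ℝ → ℝ} (hc : ContinuousOn f (Set.Ici 0))
    {X C G : Matrix m m ℂ} (hX : X.PosSemidef) (hC : C.PosSemidef) (hG : G.IsHermitian)
    (key : ∀ ε : ℝ, 0 < ε → ε ≤ 1 → (cfc f (X + (ε : ℂ) • C) - G).PosSemidef) :
    (cfc f X - G).PosSemidef := by
  have hH : ∀ ε : ℝ, 0 ≤ ε → (X + (ε : ℂ) • C).PosSemidef :=
    fun ε hε => hX.add (psd_smul_real hC hε)
  set K := (X + C).trace.re with hK
  have hspec : ∀ ε : ℝ, 0 ≤ ε → ε ≤ 1 → spectrum ℝ (X + (ε : ℂ) • C) ⊆ Set.Icc 0 K := by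
    intro ε h0 h1'
    apply spectrum_subset_Icc (hH ε h0)
    have heq : (X + C) - (X + (ε : ℂ) • C) = ((1 - ε : ℝ) : ℂ) • C := by
      push_cast
      module
    rw [heq]
    exact psd_smul_real hC (by linarith)
  have hspecX : spectrum ℝ X ⊆ Set.Icc 0 K := by
    apply spectrum_subset_Icc hX
    have heq : (X + C) - X = C := by module
    rw [heq]; exact hC
  have hIccIci : Set.Icc (0:ℝ) K ⊆ Set.Ici 0 := fun x hx => hx.1
  apply posSemidef_of_quadform ((isHermitian_cfc hX.isHermitian f).sub hG)
  intro v
  set q : Matrix m m ℂ → ℝ := fun S => (star v ⬝ᵥ S *ᵥ v).re with hq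
  rw [show (star v ⬝ᵥ (cfc f X - G) *ᵥ v).re = q (cfc f X) - q G by
    rw [hq]; simp only; rw [quad_sub, Complex.sub_re], sub_nonneg]
  set nv := (star v ⬝ᵥ v).re with hnv
  have hnv0 : 0 ≤ nv := dot_self_re_nonneg v
  refine le_of_forall_pos_le_add fun δ hδ => ?_
  set δ' := δ / (2 * nv + 2) with hδ'
  have hδ'0 : 0 < δ' := by rw [hδ']; positivity
  have hδeq : δ' * (2 * nv + 2) = δ := by
    rw [hδ']; field_simp
  obtain ⟨p, hp⟩ := exists_polynomial_near_of_continuousOn 0 K f (hc.mono hIccIci) δ' hδ'0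
  have hbound : ∀ (S : Matrix m m ℂ), S.PosSemidef → spectrum ℝ S ⊆ Set.Icc 0 K →
      |q (cfc f S) - q (Polynomial.aeval S p)| ≤ δ' * nv := by
    intro S hS hsub
    have hcfc : cfc f S - Polynomial.aeval S p
        = cfc (fun x => f x - Polynomial.eval x p) S := cfc_sub_poly hS.isHermitian f p
    have hgb : ∀ x ∈ spectrum ℝ S, |f x - Polynomial.eval x p| ≤ δ' := by
      intro x hx
      rw [abs_sub_comm]
      exact (hp x (hsub hx)).le
    have := quadform_cfc_bound hS.isHermitian hgb v
    rw [← hcfc] at this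
    rw [show q (cfc f S) - q (Polynomial.aeval S p)
      = (star v ⬝ᵥ (cfc f S - Polynomial.aeval S p) *ᵥ v).re by
        rw [hq]; simp only; rw [quad_sub, Complex.sub_re]]
    exact this
  have hcont0 : Continuous (fun ε : ℝ => q (Polynomial.aeval (X + (ε : ℂ) • C) p)) := by
    apply Complex.continuous_re.comp
    apply Continuous.dotProduct continuous_const
    apply Continuous.matrix_mulVec ?_ continuous_const
    exact (Polynomial.continuous_aeval p).comp
      (continuous_const.add ((Complex.continuous_ofReal).smul continuous_const))
  have hX0 : X + ((0 : ℝ) : ℂ) • C = X := by push_cast; module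
  have hne : (nhdsWithin (0 : ℝ) (Set.Ioc 0 1)).NeBot := by
    refine mem_closure_iff_nhdsWithin_neBot.mp ?_
    rw [closure_Ioc (by norm_num : (0:ℝ) ≠ 1)]
    exact ⟨le_refl 0, by norm_num⟩
  have hcont : Filter.Tendsto (fun ε : ℝ => q (Polynomial.aeval (X + (ε : ℂ) • C) p))
      (nhdsWithin 0 (Set.Ioc 0 1)) (nhds (q (Polynomial.aeval X p))) := by
    have h := hcont0.tendsto 0
    rw [hX0] at h
    exact h.mono_left nhdsWithin_le_nhds
  have hev := (Metric.tendsto_nhds.mp hcont δ' hδ'0).and eventually_mem_nhdsWithin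
  obtain ⟨ε, hεdist, hεmem⟩ := hev.exists
  obtain ⟨hε0, hε1⟩ := hεmem
  have k1 : q G ≤ q (cfc f (X + (ε : ℂ) • C)) := by
    have h0 := quadform_re_nonneg (key ε hε0 hε1) v
    rw [quad_sub, Complex.sub_re] at h0
    rw [hq]; simp only; linarith
  have k2 := hbound (X + (ε : ℂ) • C) (hH ε hε0.le) (hspec ε hε0.le hε1)
  have k3 := hbound X hX hspecX
  rw [Real.dist_eq] at hεdist
  have a1 := abs_le.mp k2
  have a2 := abs_le.mp k3
  have a3 := abs_le.mp hεdist.le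
  nlinarith [hδ'0, hnv0]

lemma opMon_transport {f : ℝ → ℝ} (hmono : OperatorMonotone f) {l : Type*} [Fintype l]
    [DecidableEq l] {A B : Matrix l l ℂ} (hA : A.PosSemidef) (hB : B.PosSemidef)
    (hBA : (B - A).PosSemidef) : (cfc f B - cfc f A).PosSemidef := by
  let e : Fin (Fintype.card l) ≃ l := (Fintype.equivFin l).symm
  have h := hmono (Fintype.card l) (A.submatrix e e) (B.submatrix e e)
    (hA.submatrix e) (hB.submatrix e) (hBA.submatrix ⇑e)
  rw [cfc_submatrix_equiv f hA.isHermitian e, cfc_submatrix_equiv f hB.isHermitian e] at h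
  have h' : (((cfc f B - cfc f A).submatrix ⇑e ⇑e)).PosSemidef := h
  have h2 := h'.submatrix ⇑e.symm
  rwa [submatrix_submatrix, Equiv.self_comp_symm, submatrix_id_id] at h2

lemma isHermitian_toBlocks₁₁ {M : Matrix (m ⊕ m) (m ⊕ m) ℂ} (hM : M.IsHermitian) :
    M.toBlocks₁₁.IsHermitian := by
  show (M.submatrix Sum.inl Sum.inl)ᴴ = M.submatrix Sum.inl Sum.inl
  rw [conjTranspose_submatrix, hM.eq]

lemma corner {f : ℝ → ℝ} (hmono : OperatorMonotone f) (hc : ContinuousOn f (Set.Ici 0))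
    {M : Matrix (m ⊕ m) (m ⊕ m) ℂ} (hM : M.PosSemidef) :
    (cfc f M.toBlocks₁₁ - (cfc f M).toBlocks₁₁).PosSemidef := by
  set X : Matrix m m ℂ := M.toBlocks₁₁ with hXdef
  set R : Matrix m m ℂ := M.toBlocks₁₂ with hRdef
  set Y : Matrix m m ℂ := M.toBlocks₂₂ with hYdef
  have hX : X.PosSemidef := hM.submatrix Sum.inl
  have hY : Y.PosSemidef := hM.submatrix Sum.inr
  have hC : (R * Rᴴ).PosSemidef := posSemidef_self_mul_conjTranspose R
  have hG : (cfc f M).toBlocks₁₁.IsHermitian :=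
    isHermitian_toBlocks₁₁ (isHermitian_cfc hM.isHermitian f)
  have h21 : M.toBlocks₂₁ = Rᴴ := by
    ext i j
    have h := congrFun (congrFun hM.isHermitian.eq (Sum.inr i)) (Sum.inl j)
    rw [conjTranspose_apply] at h
    rw [hRdef]
    simp only [toBlocks₂₁, toBlocks₁₂, conjTranspose_apply, of_apply]
    exact h.symm
  have hMblock : M = fromBlocks X R Rᴴ Y := by
    conv_lhs => rw [← fromBlocks_toBlocks M]
    rw [h21]
  apply psd_limit hc hX hC hG
  intro ε hε0 hε1
  have hti : (0:ℝ) < ε⁻¹ := inv_pos.mpr hε0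
  have hN := witness_psd R hti
  have hcast : ((ε⁻¹ : ℝ) : ℂ)⁻¹ = (ε : ℂ) := by
    push_cast
    rw [inv_inv]
  rw [hcast] at hN
  set N : Matrix (m ⊕ m) (m ⊕ m) ℂ :=
    fromBlocks ((ε:ℂ) • (R * Rᴴ)) (-R) (-Rᴴ) (((ε⁻¹:ℝ):ℂ) • 1) with hNdef
  have hDblocks : M + N = fromBlocks (X + (ε:ℂ) • (R * Rᴴ)) 0 0 (Y + ((ε⁻¹:ℝ):ℂ) • 1) := by
    rw [hMblock, hNdef, fromBlocks_add]
    rw [add_neg_cancel, add_neg_cancel]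
  have hDpsd : (M + N).PosSemidef := hM.add hN
  have hdiff : ((M + N) - M).PosSemidef := by rw [add_sub_cancel_left]; exact hN
  have hmonoapp := opMon_transport hmono hM hDpsd hdiff
  have hXC : (X + (ε:ℂ) • (R * Rᴴ)).PosSemidef := hX.add (psd_smul_real hC hε0.le)
  have hY1 : (Y + ((ε⁻¹:ℝ):ℂ) • 1).PosSemidef :=
    hY.add (psd_smul_real PosSemidef.one hti.le)
  rw [hDblocks, cfc_fromBlocks hXC.isHermitian hY1.isHermitian f] at hmonoapp
  exact hmonoapp.submatrix Sum.inl

lemma real_smul_eq (r : ℝ) (P : Matrix m m ℂ) : r • P = (r : ℂ) • P := by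
  ext i j
  simp [Complex.real_smul]

lemma psd_smul_real' {P : Matrix m m ℂ} (hP : P.PosSemidef) {r : ℝ} (hr : 0 ≤ r) :
    (r • P).PosSemidef := by
  rw [real_smul_eq]
  exact psd_smul_real hP hr

lemma quad_add (S T : Matrix m m ℂ) (v : m → ℂ) :
    star v ⬝ᵥ (S + T) *ᵥ v = star v ⬝ᵥ S *ᵥ v + star v ⬝ᵥ T *ᵥ v := by
  rw [add_mulVec, dotProduct_add]

lemma quad_smul_real (r : ℝ) (X : Matrix m m ℂ) (v : m → ℂ) :
    star v ⬝ᵥ (r • X) *ᵥ v = (r : ℂ) * (star v ⬝ᵥ X *ᵥ v) := by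
  rw [real_smul_eq, smul_mulVec, dotProduct_smul, smul_eq_mul]

lemma concave_to_mono {f : ℝ → ℝ} (hnn : ∀ x : ℝ, 0 ≤ x → 0 ≤ f x)
    (hconc : OperatorConcave f) : OperatorMonotone f := by
  intro n A B hA hB hBA
  have hherm : (cfc f B - cfc f A).IsHermitian :=
    (isHermitian_cfc hB.isHermitian f).sub (isHermitian_cfc hA.isHermitian f)
  apply posSemidef_of_quadform hherm
  intro v
  rw [quad_sub, Complex.sub_re, sub_nonneg]
  set qA := (star v ⬝ᵥ (cfc f A) *ᵥ v).re with hqA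
  set qB := (star v ⬝ᵥ (cfc f B) *ᵥ v).re with hqB
  have key : ∀ s : ℝ, 0 < s → s < 1 → s * qA ≤ qB := by
    intro s h0 h1
    have h1s : (0:ℝ) < 1 - s := by linarith
    set Cs : Matrix (Fin n) (Fin n) ℂ := ((1 - s)⁻¹ : ℝ) • (B - s • A) with hCsdef
    have hBsA : (B - s • A).PosSemidef := by
      have heq : B - s • A = (B - A) + (1 - s) • A := by
        rw [real_smul_eq, real_smul_eq]
        push_cast
        module
      rw [heq]
      exact hBA.add (psd_smul_real' hA h1s.le)
    have hCspsd : Cs.PosSemidef := psd_smul_real' hBsA (by positivity)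
    have hcomb : s • A + (1 - s) • Cs = B := by
      rw [hCsdef, smul_smul, mul_inv_cancel₀ h1s.ne', one_smul, add_comm, sub_add_cancel]
    have h := hconc n A Cs hA hCspsd s ⟨h0.le, h1.le⟩
    rw [hcomb] at h
    have hq := quadform_re_nonneg h v
    rw [quad_sub, quad_add, quad_smul_real, quad_smul_real, Complex.sub_re, Complex.add_re,
      Complex.re_ofReal_mul, Complex.re_ofReal_mul] at hq
    have hCq : 0 ≤ (star v ⬝ᵥ (cfc f Cs) *ᵥ v).re :=
      quadform_re_nonneg (posSemidef_cfc hCspsd f hnn) v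
    nlinarith [hq, hCq]
  refine le_of_forall_pos_le_add fun δ hδ => ?_
  set s : ℝ := max (1/2) (1 - δ / (|qA| + 1)) with hs
  have habs : (0:ℝ) < |qA| + 1 := by positivity
  have hs0 : 0 < s := lt_of_lt_of_le (by norm_num) (le_max_left _ _)
  have hs1 : s < 1 := by
    apply max_lt (by norm_num)
    have : 0 < δ / (|qA| + 1) := by positivity
    linarith
  have hks := key s hs0 hs1
  have h1s : 1 - s ≤ δ / (|qA| + 1) := by
    have := le_max_right (1/2 : ℝ) (1 - δ / (|qA| + 1))
    linarith [this.trans (le_refl s)]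
  have e1 : (1 - s) * qA ≤ (1 - s) * (|qA| + 1) :=
    mul_le_mul_of_nonneg_left (by linarith [le_abs_self qA]) (by linarith)
  have e2 : (1 - s) * (|qA| + 1) ≤ (δ / (|qA| + 1)) * (|qA| + 1) :=
    mul_le_mul_of_nonneg_right h1s habs.le
  have e3 : (δ / (|qA| + 1)) * (|qA| + 1) = δ := div_mul_cancel₀ _ habs.ne'
  nlinarith [hks, e1, e2, e3]

lemma mono_to_concave {f : ℝ → ℝ} (hc : ContinuousOn f (Set.Ici 0))
    (hmono : OperatorMonotone f) : OperatorConcave f := by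
  intro n A B hA hB s hs
  obtain ⟨hs0, hs1⟩ := hs
  have h1s0 : (0:ℝ) ≤ 1 - s := by linarith
  set c : ℝ := Real.sqrt s with hcdef
  set d : ℝ := Real.sqrt (1 - s) with hddef
  have hc2 : (c:ℂ) * c = (s:ℂ) := by norm_cast; exact Real.mul_self_sqrt hs0
  have hd2 : (d:ℂ) * d = ((1 - s : ℝ):ℂ) := by norm_cast; exact Real.mul_self_sqrt h1s0
  have hsum : (c:ℂ) * c + (d:ℂ) * d = 1 := by rw [hc2, hd2]; push_cast; ring
  set U : Matrix (Fin n ⊕ Fin n) (Fin n ⊕ Fin n) ℂ :=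
    fromBlocks ((c:ℂ) • 1) (-((d:ℂ) • 1)) ((d:ℂ) • 1) ((c:ℂ) • 1) with hU
  have hUH : Uᴴ = fromBlocks ((c:ℂ) • 1) ((d:ℂ) • 1) (-((d:ℂ) • 1)) ((c:ℂ) • 1) := by
    rw [hU, fromBlocks_conjTranspose]
    congr 1 <;>
    simp [conjTranspose_smul, Complex.star_def, Complex.conj_ofReal]
  have hmul : ∀ (x y : ℂ), ((x • 1 : Matrix (Fin n) (Fin n) ℂ)) * (y • 1) = (x * y) • 1 := by
    intro x y
    rw [smul_mul_smul_comm, Matrix.one_mul]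
  have hU2 : Uᴴ * U = 1 := by
    have b11 : ((c:ℂ) • 1 : Matrix (Fin n) (Fin n) ℂ) * ((c:ℂ) • 1)
        + ((d:ℂ) • 1) * ((d:ℂ) • 1) = 1 := by
      rw [hmul, hmul, ← add_smul, hsum, one_smul]
    have b12 : ((c:ℂ) • 1 : Matrix (Fin n) (Fin n) ℂ) * -((d:ℂ) • 1)
        + ((d:ℂ) • 1) * ((c:ℂ) • 1) = 0 := by
      rw [Matrix.mul_neg, hmul, hmul, mul_comm (c:ℂ) (d:ℂ)]
      exact neg_add_cancel _
    have b21 : (-((d:ℂ) • 1) : Matrix (Fin n) (Fin n) ℂ) * ((c:ℂ) • 1)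
        + ((c:ℂ) • 1) * ((d:ℂ) • 1) = 0 := by
      rw [Matrix.neg_mul, hmul, hmul, mul_comm (d:ℂ) (c:ℂ)]
      exact neg_add_cancel _
    have b22 : (-((d:ℂ) • 1) : Matrix (Fin n) (Fin n) ℂ) * -((d:ℂ) • 1)
        + ((c:ℂ) • 1) * ((c:ℂ) • 1) = 1 := by
      rw [Matrix.neg_mul, Matrix.mul_neg, neg_neg, hmul, hmul, ← add_smul, add_comm, hsum,
        one_smul]
    rw [hUH, hU, fromBlocks_multiply, b11, b12, b21, b22, fromBlocks_one]
  have hU1 : U * Uᴴ = 1 := by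
    have b11 : ((c:ℂ) • 1 : Matrix (Fin n) (Fin n) ℂ) * ((c:ℂ) • 1)
        + (-((d:ℂ) • 1)) * -((d:ℂ) • 1) = 1 := by
      rw [Matrix.neg_mul, Matrix.mul_neg, neg_neg, hmul, hmul, ← add_smul, hsum, one_smul]
    have b12 : ((c:ℂ) • 1 : Matrix (Fin n) (Fin n) ℂ) * ((d:ℂ) • 1)
        + (-((d:ℂ) • 1)) * ((c:ℂ) • 1) = 0 := by
      rw [Matrix.neg_mul, hmul, hmul, mul_comm (d:ℂ) (c:ℂ)]
      exact add_neg_cancel _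
    have b21 : ((d:ℂ) • 1 : Matrix (Fin n) (Fin n) ℂ) * ((c:ℂ) • 1)
        + ((c:ℂ) • 1) * -((d:ℂ) • 1) = 0 := by
      rw [Matrix.mul_neg, hmul, hmul, mul_comm (c:ℂ) (d:ℂ)]
      exact add_neg_cancel _
    have b22 : ((d:ℂ) • 1 : Matrix (Fin n) (Fin n) ℂ) * ((d:ℂ) • 1)
        + ((c:ℂ) • 1) * ((c:ℂ) • 1) = 1 := by
      rw [hmul, hmul, ← add_smul, add_comm, hsum, one_smul]
    rw [hUH, hU, fromBlocks_multiply, b11, b12, b21, b22, fromBlocks_one]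
  have tripl : ∀ (x : ℂ) (P : Matrix (Fin n) (Fin n) ℂ),
      (x • (1 : Matrix (Fin n) (Fin n) ℂ)) * P * (x • 1) = (x * x) • P := by
    intro x P
    rw [smul_mul_assoc, Matrix.one_mul, mul_smul_comm, Matrix.mul_one, smul_smul]
  have block_calc : ∀ P Q : Matrix (Fin n) (Fin n) ℂ,
      (Uᴴ * fromBlocks P 0 0 Q * U).toBlocks₁₁ = (s:ℂ) • P + ((1 - s : ℝ):ℂ) • Q := by
    intro P Q
    rw [hUH, hU, fromBlocks_multiply, fromBlocks_multiply, toBlocks_fromBlocks₁₁,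
      Matrix.mul_zero, Matrix.mul_zero, add_zero, zero_add, tripl, tripl, hc2, hd2]
  set T : Matrix (Fin n ⊕ Fin n) (Fin n ⊕ Fin n) ℂ := fromBlocks A 0 0 B with hT
  have hTpsd : T.PosSemidef := posSemidef_fromBlocks_diag hA hB
  have hMpsd : (Uᴴ * T * U).PosSemidef := hTpsd.conjTranspose_mul_mul_same U
  have hcfcM : cfc f (Uᴴ * T * U) = Uᴴ * cfc f T * U := by
    have h1' : Uᴴ * (Uᴴ)ᴴ = 1 := by rw [conjTranspose_conjTranspose]; exact hU2
    have h2' : (Uᴴ)ᴴ * Uᴴ = 1 := by rw [conjTranspose_conjTranspose]; exact hU1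
    have := cfc_conj_unitary f hTpsd.isHermitian h1' h2'
    rwa [conjTranspose_conjTranspose] at this
  have e₁ : s • A + (1 - s) • B = (Uᴴ * T * U).toBlocks₁₁ := by
    rw [hT, block_calc A B, real_smul_eq, real_smul_eq]
  have e₂ : s • cfc f A + (1 - s) • cfc f B = (cfc f (Uᴴ * T * U)).toBlocks₁₁ := by
    rw [hcfcM, hT, cfc_fromBlocks hA.isHermitian hB.isHermitian f, block_calc,
      real_smul_eq, real_smul_eq]
  rw [e₁, e₂]
  exact corner hmono hc hMpsd

end OpMonAux

theorem stmt11 (f : ℝ → ℝ) (hc : ContinuousOn f (Set.Ici 0))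
    (hnn : ∀ x : ℝ, 0 ≤ x → 0 ≤ f x) :
    OperatorMonotone f ↔ OperatorConcave f :=
  ⟨fun h => OpMonAux.mono_to_concave hc h, fun h => OpMonAux.concave_to_mono hnn h⟩
end

section
/- Let μ be a finite Borel measure on [0,1] and let f : [0,∞) → [0,∞) be defined by f(x) = ∫_{[0,1]} (1 !_t x) dμ(t). Let Θ : [0,1] → [0,1] be the map t ↦ 1-t and let Θ_*μ denote the pushforward measure of μ under Θ. Then for every x ∈ (0,∞), x·f(1/x) = ∫_{[0,1]} (1 !_t x) d(Θ_*μ)(t). -/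
open MeasureTheory Real

/-- The map `Θ : [0,1] → [0,1]`, `t ↦ 1 - t`. -/
noncomputable def theta (t : Set.Icc (0 : ℝ) 1) : Set.Icc (0 : ℝ) 1 :=
  ⟨1 - (t : ℝ), Set.mem_Icc.mpr
    ⟨by linarith [(Set.mem_Icc.mp t.2).2], by linarith [(Set.mem_Icc.mp t.2).1]⟩⟩

lemma whm_of_ne (t x : ℝ) (hx : x ≠ 0) : whm t x = x / ((1 - t) * x + t) := by
  simp [whm, hx]

lemma theta_cont : Continuous theta :=
  Continuous.subtype_mk (continuous_const.sub continuous_subtype_val) _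

lemma whm_meas (x : ℝ) (hx : x ≠ 0) :
    Measurable fun t : Set.Icc (0 : ℝ) 1 => whm (t : ℝ) x := by
  have : (fun t : Set.Icc (0 : ℝ) 1 => whm (t : ℝ) x)
      = fun t : Set.Icc (0 : ℝ) 1 => x / ((1 - (t : ℝ)) * x + t) := by
    funext t; exact whm_of_ne _ _ hx
  rw [this]
  exact measurable_const.div (((measurable_const.sub measurable_subtype_coe).mul
    measurable_const).add measurable_subtype_coe)

theorem stmt14 (μ : Measure (Set.Icc (0 : ℝ) 1)) [IsFiniteMeasure μ] (f : ℝ → ℝ)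
    (hf : ∀ x : ℝ, 0 ≤ x → f x = ∫ t : Set.Icc (0 : ℝ) 1, whm (t : ℝ) x ∂μ)
    (x : ℝ) (hx : 0 < x) :
    x * f (1 / x) = ∫ t : Set.Icc (0 : ℝ) 1, whm (t : ℝ) x ∂(Measure.map theta μ) := by
  have hxne : x ≠ 0 := hx.ne'
  rw [integral_map theta_cont.measurable.aemeasurable
    (whm_meas x hxne).aestronglyMeasurable]
  rw [hf (1 / x) (by positivity), ← integral_const_mul]
  congr 1
  funext t
  obtain ⟨t, ht0, ht1⟩ := t
  have h1x : (1 : ℝ) / x ≠ 0 := by positivity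
  rw [whm_of_ne _ _ h1x, whm_of_ne _ _ hxne]
  have hd : (1 : ℝ) + (x * t - t) ≠ 0 := by
    rcases lt_or_eq_of_le ht1 with h | h
    · nlinarith
    · rw [h]; simpa using hxne
  simp only [theta]
  field_simp
  ring
end

section
/- Let μ be a finite Borel measure on [0,1] and let f : [0,∞) → [0,∞) be defined by f(x) = ∫_{[0,1]} (1 !_t x) dμ(t). Let Θ : [0,1] → [0,1] be the map t ↦ 1-t. Then f is symmetric, i.e. f(x) = x·f(1/x) for all x ∈ (0,∞), if and only if μ is symmetric, i.e. the pushforward measure Θ_*μ equals μ. -/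
open MeasureTheory Real

local notation "Ω" => Set.Icc (0 : ℝ) 1

namespace Stmt16Aux

lemma t_mem (t : Ω) : 0 ≤ (t:ℝ) ∧ (t:ℝ) ≤ 1 := Set.mem_Icc.mp t.2

lemma theta_continuous : Continuous theta :=
  Continuous.subtype_mk (continuous_const.sub continuous_subtype_val) _

lemma denom_pos (t : Ω) {x : ℝ} (hx : 0 < x) : 0 < (1 - (t:ℝ)) * x + t := by
  obtain ⟨h0, h1⟩ := t_mem t
  rcases eq_or_lt_of_le h0 with h | h
  · rw [← h]; simpa using hx
  · nlinarith [mul_nonneg (sub_nonneg.mpr h1) hx.le]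

lemma whm_eq (t : Ω) {x : ℝ} (hx : 0 < x) :
    whm (t:ℝ) x = x / ((1 - (t:ℝ)) * x + t) := by
  rw [whm, if_neg]
  rintro ⟨-, h⟩; exact hx.ne' h

lemma continuous_whm {x : ℝ} (hx : 0 < x) : Continuous fun t : Ω => whm (t:ℝ) x := by
  have : Continuous fun t : Ω => x / ((1 - (t:ℝ)) * x + t) := by
    apply continuous_const.div
    · fun_prop
    · exact fun t => (denom_pos t hx).ne'
  exact this.congr fun t => (whm_eq t hx).symm

lemma integrable_of_continuous (μ : Measure Ω) [IsFiniteMeasure μ] {g : Ω → ℝ}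
    (hg : Continuous g) : Integrable g μ :=
  (BoundedContinuousFunction.mkOfCompact ⟨g, hg⟩).integrable μ

/-- x * f(1/x) corresponds to integrating against the pushforward. -/
lemma flip_integral (μ : Measure Ω) [IsFiniteMeasure μ] {x : ℝ} (hx : 0 < x) :
    x * ∫ t : Ω, whm (t:ℝ) (1 / x) ∂μ = ∫ t : Ω, whm (t:ℝ) x ∂(μ.map theta) := by
  have hinvx : 0 < 1 / x := by positivity
  rw [integral_map theta_continuous.measurable.aemeasurable
    ((continuous_whm hx).aestronglyMeasurable)]
  rw [← integral_const_mul]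
  congr 1
  funext t
  obtain ⟨h0, h1⟩ := t_mem t
  have h1' : ((theta t : Ω) : ℝ) = 1 - (t:ℝ) := rfl
  rw [whm_eq t hinvx, whm_eq (theta t) hx, h1']
  have d1 : (0:ℝ) < (1 - (t:ℝ)) * (1/x) + t := denom_pos t hinvx
  have d2 : (0:ℝ) < (1 - (1 - (t:ℝ))) * x + (1 - (t:ℝ)) := denom_pos (theta t) hx
  field_simp
  ring

/-- Geometric series representation of the integral transform. -/
lemma series_repr (μ : Measure Ω) [IsFiniteMeasure μ] {y : ℝ} (hy : |y| < 1) :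
    ∫ t : Ω, whm (t:ℝ) (1 - y)⁻¹ ∂μ = ∑' n : ℕ, (∫ t : Ω, (t:ℝ)^n ∂μ) * y^n := by
  have hy1 : y < 1 := lt_of_le_of_lt (le_abs_self y) hy
  have h1y : (0:ℝ) < 1 - y := by linarith
  have hx : 0 < (1 - y)⁻¹ := by positivity
  have key : ∀ t : Ω, whm (t:ℝ) (1 - y)⁻¹ = ∑' n : ℕ, (t:ℝ)^n * y^n := by
    intro t
    obtain ⟨h0, h1⟩ := t_mem t
    have hty : |(t:ℝ) * y| < 1 := by
      rw [abs_mul, abs_of_nonneg h0]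
      calc (t:ℝ) * |y| ≤ 1 * |y| := by nlinarith [abs_nonneg y]
        _ < 1 := by rwa [one_mul]
    have hgeom : ∑' n : ℕ, ((t:ℝ) * y)^n = (1 - (t:ℝ)*y)⁻¹ :=
      tsum_geometric_of_norm_lt_one (by rwa [Real.norm_eq_abs])
    have h1ty : (0:ℝ) < 1 - (t:ℝ)*y := by
      have := abs_lt.mp hty
      linarith [this.2]
    have : whm (t:ℝ) (1 - y)⁻¹ = (1 - (t:ℝ)*y)⁻¹ := by
      rw [whm_eq t hx]
      have d1 : (0:ℝ) < (1 - (t:ℝ)) * (1-y)⁻¹ + t := denom_pos t hx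
      rw [div_eq_iff d1.ne', eq_comm, inv_mul_eq_div, div_eq_iff h1ty.ne']
      field_simp
      ring
    rw [this, ← hgeom]
    congr 1; funext n; rw [mul_pow]
  simp_rw [key]
  rw [← MeasureTheory.integral_tsum_of_summable_integral_norm]
  · congr 1; funext n
    rw [← integral_mul_const]
  · intro n
    exact integrable_of_continuous μ (by fun_prop)
  · apply Summable.of_nonneg_of_le (fun n => integral_nonneg fun t => norm_nonneg _)
      (fun n => ?_) (Summable.mul_right ((μ Set.univ).toReal)
        (summable_geometric_of_lt_one (abs_nonneg y) hy))
    calc ∫ t : Ω, ‖(t:ℝ)^n * y^n‖ ∂μ ≤ ∫ _t : Ω, |y|^n ∂μ := by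
          apply integral_mono_of_nonneg (Filter.Eventually.of_forall fun t => norm_nonneg _)
            (integrable_const _)
          apply Filter.Eventually.of_forall
          intro t
          obtain ⟨h0, h1⟩ := t_mem t
          show ‖(t:ℝ)^n * y^n‖ ≤ |y|^n
          rw [Real.norm_eq_abs, abs_mul, abs_pow, abs_pow, abs_of_nonneg h0]
          have h2 : (t:ℝ)^n ≤ 1 := pow_le_one₀ h0 h1
          nlinarith [pow_nonneg (abs_nonneg y) n, pow_nonneg h0 n]
      _ = |y|^n * (μ Set.univ).toReal := by
          rw [integral_const, smul_eq_mul, mul_comm, measureReal_def]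

/-- Uniqueness of bounded power series coefficients. -/
lemma coeff_unique {a b : ℕ → ℝ} {M : ℝ}
    (ha : ∀ n, |a n| ≤ M) (hb : ∀ n, |b n| ≤ M)
    (h : ∀ y : ℝ, |y| < 1 → ∑' n : ℕ, a n * y^n = ∑' n : ℕ, b n * y^n) : a = b := by
  have hrad : ∀ (c : ℕ → ℝ), (∀ n, |c n| ≤ M) →
      (1:ENNReal) ≤ (FormalMultilinearSeries.ofScalars ℝ c).radius := by
    intro c hc
    apply FormalMultilinearSeries.le_radius_of_bound _ M
    intro n
    rw [FormalMultilinearSeries.ofScalars_norm]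
    simpa using hc n
  have h01 : (0:ENNReal) < 1 := by norm_num
  have hpa : HasFPowerSeriesAt (FormalMultilinearSeries.ofScalarsSum a)
      (FormalMultilinearSeries.ofScalars ℝ a) 0 :=
    ((FormalMultilinearSeries.ofScalars ℝ a).hasFPowerSeriesOnBall
      (lt_of_lt_of_le h01 (hrad a ha))).hasFPowerSeriesAt
  have hqa : HasFPowerSeriesAt (FormalMultilinearSeries.ofScalarsSum b)
      (FormalMultilinearSeries.ofScalars ℝ b) 0 :=
    ((FormalMultilinearSeries.ofScalars ℝ b).hasFPowerSeriesOnBall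
      (lt_of_lt_of_le h01 (hrad b hb))).hasFPowerSeriesAt
  have heq : ∀ᶠ z in nhds (0:ℝ), FormalMultilinearSeries.ofScalarsSum a z
      = FormalMultilinearSeries.ofScalarsSum b z := by
    filter_upwards [Metric.ball_mem_nhds (0:ℝ) one_pos] with z hz
    rw [Metric.mem_ball, dist_zero_right, Real.norm_eq_abs] at hz
    rw [FormalMultilinearSeries.ofScalars_sum_eq, FormalMultilinearSeries.ofScalars_sum_eq]
    simpa [smul_eq_mul] using h z hz
  exact FormalMultilinearSeries.ofScalars_series_injective (𝕜 := ℝ) (E := ℝ)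
    (hpa.eq_formalMultilinearSeries_of_eventually hqa heq)

end Stmt16Aux

namespace Stmt16Aux

lemma continuous_integral_CM (μ : Measure Ω) [IsFiniteMeasure μ] :
    Continuous fun g : C(Ω, ℝ) => ∫ t, g t ∂μ := by
  apply LipschitzWith.continuous (K := (μ Set.univ).toNNReal)
  apply LipschitzWith.of_dist_le_mul
  intro f g
  have hfi := integrable_of_continuous μ f.continuous
  have hgi := integrable_of_continuous μ g.continuous
  rw [Real.dist_eq, ← norm_eq_abs, ← integral_sub hfi hgi]
  have hb : ∀ᵐ t ∂μ, ‖f t - g t‖ ≤ dist f g := by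
    apply Filter.Eventually.of_forall
    intro t
    rw [← dist_eq_norm]
    exact ContinuousMap.dist_apply_le_dist t
  calc ‖∫ t, (f t - g t) ∂μ‖ ≤ dist f g * (μ Set.univ).toReal :=
        norm_integral_le_of_norm_le_const hb
    _ = ((μ Set.univ).toNNReal : ℝ) * dist f g := by
        rw [mul_comm]
        rfl

lemma integral_poly_eq {μ ν : Measure Ω} [IsFiniteMeasure μ] [IsFiniteMeasure ν]
    (hmom : ∀ n : ℕ, ∫ t : Ω, (t:ℝ)^n ∂μ = ∫ t : Ω, (t:ℝ)^n ∂ν) (p : Polynomial ℝ) :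
    ∫ t : Ω, p.eval (t:ℝ) ∂μ = ∫ t : Ω, p.eval (t:ℝ) ∂ν := by
  have hev : ∀ t : Ω, p.eval (t:ℝ) =
      ∑ i ∈ Finset.range (p.natDegree + 1), p.coeff i * (t:ℝ)^i := fun t =>
    Polynomial.eval_eq_sum_range _
  simp_rw [hev]
  rw [integral_finset_sum _ (fun i _ => integrable_of_continuous μ (by fun_prop)),
    integral_finset_sum _ (fun i _ => integrable_of_continuous ν (by fun_prop))]
  refine Finset.sum_congr rfl fun i _ => ?_
  rw [integral_const_mul, integral_const_mul, hmom i]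

lemma measures_eq {μ ν : Measure Ω} [IsFiniteMeasure μ] [IsFiniteMeasure ν]
    (hmom : ∀ n : ℕ, ∫ t : Ω, (t:ℝ)^n ∂μ = ∫ t : Ω, (t:ℝ)^n ∂ν) : μ = ν := by
  have hcont : ∀ g : C(Ω, ℝ), ∫ t, g t ∂μ = ∫ t, g t ∂ν := by
    intro g
    have hS : IsClosed {g : C(Ω, ℝ) | ∫ t, g t ∂μ = ∫ t, g t ∂ν} :=
      isClosed_eq (continuous_integral_CM μ) (continuous_integral_CM ν)
    have hsub : (polynomialFunctions Ω : Set C(Ω, ℝ)) ⊆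
        {g : C(Ω, ℝ) | ∫ t, g t ∂μ = ∫ t, g t ∂ν} := by
      rintro g hg
      rw [polynomialFunctions_coe] at hg
      obtain ⟨p, rfl⟩ := hg
      exact integral_poly_eq hmom p
    have htop : g ∈ (polynomialFunctions Ω).topologicalClosure :=
      (polynomialFunctions.topologicalClosure Ω).symm ▸ Algebra.mem_top
    have : g ∈ closure (polynomialFunctions Ω : Set C(Ω, ℝ)) := htop
    exact hS.closure_subset_iff.mpr hsub this
  apply ext_of_forall_lintegral_eq_of_IsFiniteMeasure
  intro f
  have hc : Continuous fun t : Ω => ((f t : ℝ)) := NNReal.continuous_coe.comp f.continuous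
  rw [lintegral_coe_eq_integral _ (integrable_of_continuous μ hc),
    lintegral_coe_eq_integral _ (integrable_of_continuous ν hc)]
  exact congrArg ENNReal.ofReal (hcont ⟨fun t => (f t : ℝ), hc⟩)

end Stmt16Aux

open Stmt16Aux

theorem stmt16 (μ : Measure (Set.Icc (0 : ℝ) 1)) [IsFiniteMeasure μ] (f : ℝ → ℝ)
    (hf : ∀ x : ℝ, 0 ≤ x → f x = ∫ t : Set.Icc (0 : ℝ) 1, whm (t : ℝ) x ∂μ) :
    (∀ x : ℝ, 0 < x → f x = x * f (1 / x)) ↔ Measure.map theta μ = μ := by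
  haveI : IsFiniteMeasure (μ.map theta) := Measure.isFiniteMeasure_map μ theta
  constructor
  · intro hsym
    have H : ∀ x : ℝ, 0 < x →
        (∫ t : Ω, whm (t:ℝ) x ∂(μ.map theta)) = ∫ t : Ω, whm (t:ℝ) x ∂μ := by
      intro x hx
      have h1 : (0:ℝ) ≤ 1 / x := by positivity
      rw [← flip_integral μ hx, ← hf _ h1, ← hsym x hx, hf x hx.le]
    apply measures_eq
    have hbd : ∀ (κ : Measure Ω) (_ : IsFiniteMeasure κ) (n : ℕ),
        |∫ t : Ω, (t:ℝ)^n ∂κ| ≤ (κ Set.univ).toReal := by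
      intro κ hκ n
      rw [← norm_eq_abs]
      calc ‖∫ t : Ω, (t:ℝ)^n ∂κ‖ ≤ 1 * (κ Set.univ).toReal := by
            apply norm_integral_le_of_norm_le_const
            apply Filter.Eventually.of_forall
            intro t
            obtain ⟨h0, h1⟩ := t_mem t
            rw [Real.norm_eq_abs, abs_pow, abs_of_nonneg h0]
            exact pow_le_one₀ h0 h1
        _ = (κ Set.univ).toReal := one_mul _
    have := coeff_unique (M := max ((μ.map theta) Set.univ).toReal ((μ Set.univ).toReal))
      (a := fun n => ∫ t : Ω, (t:ℝ)^n ∂(μ.map theta)) (b := fun n => ∫ t : Ω, (t:ℝ)^n ∂μ)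
      (fun n => le_max_iff.mpr (Or.inl (hbd _ inferInstance n)))
      (fun n => le_max_iff.mpr (Or.inr (hbd _ inferInstance n)))
      (fun y hy => by
        rw [← series_repr _ hy, ← series_repr _ hy]
        have hy1 : y < 1 := lt_of_le_of_lt (le_abs_self y) hy
        have h1y : (0:ℝ) < 1 - y := by linarith
        exact H ((1 - y)⁻¹) (by positivity))
    exact fun n => congrFun this n
  · intro hθ x hx
    have h1 : (0:ℝ) ≤ 1 / x := by positivity
    rw [hf x hx.le, hf (1/x) h1]
    calc (∫ t : Ω, whm (t:ℝ) x ∂μ) = ∫ t : Ω, whm (t:ℝ) x ∂(μ.map theta) := by rw [hθ]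
      _ = x * ∫ t : Ω, whm (t:ℝ) (1/x) ∂μ := (flip_integral μ hx).symm
end

section
/- Let g : [0,1] → [0,∞) be Lebesgue-integrable and let f : [0,∞) → [0,∞) be defined by f(x) = ∫_{[0,1]} g(t)·(1 !_t x) dm(t), where m is Lebesgue measure on [0,1]. Then f is symmetric, i.e. f(x) = x·f(1/x) for all x ∈ (0,∞), if and only if g(1-t) = g(t) for m-almost every t ∈ [0,1]. -/
open MeasureTheory Real

/-- Lebesgue measure `m` on the unit interval `[0,1]`. -/
noncomputable def lebIcc : Measure (Set.Icc (0 : ℝ) 1) :=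
  (volume : Measure ℝ).comap Subtype.val

set_option maxHeartbeats 1000000

local notation "II" => Set.Icc (0:ℝ) 1

lemma mpRefl : MeasurePreserving (fun t : ℝ => 1 - t)
    (volume.restrict II) (volume.restrict II) := by
  have h : MeasurePreserving (fun t : ℝ => 1 - t) volume volume :=
    Measure.measurePreserving_sub_left volume 1
  have hpre : (fun t : ℝ => 1 - t) ⁻¹' II = II := by
    ext t; simp only [Set.mem_preimage, Set.mem_Icc]; constructor <;> intro ⟨a,b⟩ <;> constructor <;> linarith
  simpa [hpre] using h.restrict_preimage (measurableSet_Icc (a := (0:ℝ)) (b := 1))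

lemma embRefl : MeasurableEmbedding (fun t : ℝ => 1 - t) :=
  (Homeomorph.subLeft (1:ℝ)).measurableEmbedding

lemma integral_refl (F : ℝ → ℝ) : ∫ t in II, F (1 - t) = ∫ t in II, F t :=
  mpRefl.integral_comp embRefl F

lemma integrable_refl {F : ℝ → ℝ} (h : IntegrableOn F II) :
    IntegrableOn (fun t => F (1 - t)) II :=
  (mpRefl.integrable_comp_emb embRefl).mpr h

noncomputable def extF (F : Set.Icc (0:ℝ) 1 → ℝ) : ℝ → ℝ :=
  fun t => if h : t ∈ Set.Icc (0:ℝ) 1 then F ⟨t, h⟩ else 0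

lemma integral_lebIcc (F : Set.Icc (0:ℝ) 1 → ℝ) :
    ∫ t, F t ∂lebIcc = ∫ t in Set.Icc (0:ℝ) 1, extF F t := by
  rw [lebIcc, ← integral_subtype_comap measurableSet_Icc (extF F)]
  congr 1; funext x
  simp [extF, x.2]

lemma integrable_lebIcc (F : Set.Icc (0:ℝ) 1 → ℝ) :
    Integrable F lebIcc ↔ IntegrableOn (extF F) (Set.Icc (0:ℝ) 1) := by
  rw [IntegrableOn, ← map_comap_subtype_coe (measurableSet_Icc (a := (0:ℝ)) (b := 1)),
    (MeasurableEmbedding.subtype_coe measurableSet_Icc).integrable_map_iff]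
  rw [lebIcc]
  apply integrable_congr
  filter_upwards with x
  simp [extF, Function.comp, x.2]

lemma ae_lebIcc (P : Set.Icc (0:ℝ) 1 → Prop) :
    (∀ᵐ t ∂lebIcc, P t) ↔
      ∀ᵐ t ∂(volume.restrict (Set.Icc (0:ℝ) 1)), ∀ h : t ∈ Set.Icc (0:ℝ) 1, P ⟨t, h⟩ := by
  rw [← map_comap_subtype_coe (measurableSet_Icc (a := (0:ℝ)) (b := 1)),
    (MeasurableEmbedding.subtype_coe measurableSet_Icc).ae_map_iff]
  constructor
  · intro h; filter_upwards [h] with x hx h'; convert hx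
  · intro h; filter_upwards [h] with x hx; simpa using hx x.2

lemma summable_pow {M y : ℝ} (hy : y ∈ Set.Ioo (0:ℝ) 1) (b : ℕ → ℝ) (hb : ∀ k, |b k| ≤ M) :
    Summable (fun k => b k * y ^ k) := by
  obtain ⟨hy0, hy1⟩ := hy
  apply Summable.of_norm_bounded
    (((summable_geometric_of_lt_one hy0.le hy1)).mul_left M)
  intro k
  rw [norm_mul, norm_pow, Real.norm_eq_abs, Real.norm_eq_abs, abs_of_pos hy0]
  exact mul_le_mul_of_nonneg_right (hb k) (by positivity)

lemma coeff_zero_base (M : ℝ) (b : ℕ → ℝ) (hb : ∀ k, |b k| ≤ M)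
    (h : ∀ y ∈ Set.Ioo (0:ℝ) 1, ∑' k, b k * y ^ k = 0) : b 0 = 0 := by
  have hM : 0 ≤ M := le_trans (abs_nonneg _) (hb 0)
  have key : ∀ y ∈ Set.Ioo (0:ℝ) 1, |b 0| ≤ M * y / (1 - y) := by
    intro y hy
    obtain ⟨hy0, hy1⟩ := hy
    have hs : Summable (fun k => b k * y ^ k) := summable_pow ⟨hy0, hy1⟩ b hb
    have h1 : Summable (fun k => b (k+1) * y ^ (k+1)) := (summable_nat_add_iff 1).mpr hs
    have h1a : Summable (fun k => |b (k+1) * y ^ (k+1)|) := h1.abs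
    have hsg : Summable (fun k : ℕ => M * y ^ (k+1)) := by
      refine ((summable_geometric_of_lt_one hy0.le hy1).mul_left (M * y)).congr ?_
      intro k; ring
    have h2 := Summable.tsum_eq_zero_add hs
    rw [h y ⟨hy0, hy1⟩] at h2
    simp only [pow_zero, mul_one] at h2
    have hb0 : b 0 = -∑' k, b (k+1) * y ^ (k+1) := by linarith [h2]
    have hn1 : |∑' k, b (k+1) * y ^ (k+1)| ≤ ∑' k, |b (k+1) * y ^ (k+1)| := by
      simpa only [Real.norm_eq_abs] using norm_tsum_le_tsum_norm (f := fun k => b (k+1) * y ^ (k+1))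
        (by simpa only [Real.norm_eq_abs] using h1a)
    have hn2 : ∑' k, |b (k+1) * y ^ (k+1)| ≤ ∑' k, M * y ^ (k+1) := by
      refine Summable.tsum_le_tsum ?_ h1a hsg
      intro k
      rw [abs_mul, abs_pow, abs_of_pos hy0]
      exact mul_le_mul_of_nonneg_right (hb _) (by positivity)
    have hgeo : ∑' k : ℕ, M * y ^ (k+1) = M * y / (1 - y) := by
      have he : ∀ k : ℕ, M * y ^ (k+1) = (M * y) * y ^ k := by intro k; ring
      rw [tsum_congr he, tsum_mul_left, tsum_geometric_of_lt_one hy0.le hy1]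
      field_simp
    rw [hb0, abs_neg]
    linarith
  by_contra hc
  have hb0 : 0 < |b 0| := abs_pos.mpr hc
  set y := min (1/2) (|b 0| / (4 * M + 1)) with hy
  have hy0 : 0 < y := lt_min (by norm_num) (by positivity)
  have hy1 : y < 1 := lt_of_le_of_lt (min_le_left _ _) (by norm_num)
  have hk := key y ⟨hy0, hy1⟩
  have h12 : y ≤ 1/2 := min_le_left _ _
  have hyb : y ≤ |b 0| / (4 * M + 1) := min_le_right _ _
  have hlt : M * y / (1 - y) < |b 0| := by
    have h1y : (1:ℝ)/2 ≤ 1 - y := by linarith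
    have hd1 : M * y / (1 - y) ≤ 2 * (M * y) := by
      rw [div_le_iff₀ (by linarith)]
      nlinarith [mul_nonneg hM hy0.le]
    have h2 : 2 * (M * y) ≤ 2 * M * (|b 0| / (4 * M + 1)) := by
      nlinarith [mul_le_mul_of_nonneg_left hyb (by linarith : (0:ℝ) ≤ 2 * M)]
    have h3 : 2 * M * (|b 0| / (4 * M + 1)) < |b 0| := by
      rw [mul_div_assoc', div_lt_iff₀ (by linarith)]
      nlinarith
    linarith
  linarith

lemma coeff_zero (M : ℝ) : ∀ (n : ℕ) (b : ℕ → ℝ), (∀ k, |b k| ≤ M) →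
    (∀ y ∈ Set.Ioo (0:ℝ) 1, ∑' k, b k * y ^ k = 0) → b n = 0 := by
  intro n
  induction n with
  | zero => exact fun b hb h => coeff_zero_base M b hb h
  | succ n ih =>
    intro b hb h
    refine ih (fun k => b (k+1)) (fun k => hb (k+1)) ?_
    intro y hy
    obtain ⟨hy0, hy1⟩ := hy
    have hs : Summable (fun k => b k * y ^ k) := summable_pow ⟨hy0, hy1⟩ b hb
    have h2 := Summable.tsum_eq_zero_add hs
    rw [h y ⟨hy0, hy1⟩, coeff_zero_base M b hb h] at h2
    simp only [pow_zero, mul_one, zero_mul, zero_add] at h2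
    have he : ∑' k, b (k+1) * y ^ (k+1) = y * ∑' k, b (k+1) * y ^ k := by
      rw [← tsum_mul_left]
      congr 1; funext k; ring
    rw [he] at h2
    rcases mul_eq_zero.mp h2.symm with h' | h'
    · exact absurd h' (ne_of_gt hy0)
    · exact h'

lemma intMulBdd {F w : ℝ → ℝ} (hF : IntegrableOn F II) (hw : Measurable w) {C : ℝ}
    (hC : ∀ t ∈ II, |w t| ≤ C) :
    IntegrableOn (fun t => F t * w t) II := by
  refine Integrable.mono' (hF.norm.mul_const C) (hF.aestronglyMeasurable.mul
    hw.aestronglyMeasurable) ?_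
  filter_upwards [ae_restrict_mem measurableSet_Icc] with t ht
  rw [norm_mul, Real.norm_eq_abs, Real.norm_eq_abs]
  exact mul_le_mul_of_nonneg_left (hC t ht) (abs_nonneg _)

lemma measW (x : ℝ) : Measurable (fun t : ℝ => x / ((1-t)*x + t)) :=
  measurable_const.div (((measurable_const.sub measurable_id).mul measurable_const).add
    measurable_id)

lemma boundW {x : ℝ} (hx : 0 < x) : ∀ t ∈ II, |x / ((1-t)*x + t)| ≤ max 1 x := by
  intro t ht
  obtain ⟨ht0, ht1⟩ := Set.mem_Icc.mp ht
  rcases le_total x 1 with hx1 | hx1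
  · have hd : x ≤ (1-t)*x + t := by nlinarith
    have hd0 : 0 < (1-t)*x + t := lt_of_lt_of_le hx hd
    rw [abs_of_nonneg (by positivity)]
    exact le_trans ((div_le_one hd0).mpr hd) (le_max_left _ _)
  · have hd : 1 ≤ (1-t)*x + t := by nlinarith
    have hd0 : 0 < (1-t)*x + t := lt_of_lt_of_le one_pos hd
    rw [abs_of_nonneg (by positivity)]
    calc x / ((1-t)*x + t) ≤ x / 1 := div_le_div_of_nonneg_left hx.le one_pos hd
      _ = x := div_one x
      _ ≤ max 1 x := le_max_right _ _

lemma step45 {G : ℝ → ℝ} (hGi : IntegrableOn G II)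
    (h0 : ∀ x : ℝ, 0 < x → (∫ t in II, G t * (x/((1-t)*x+t))) =
      ∫ t in II, G (1-t) * (x/((1-t)*x+t))) :
    ∀ y ∈ Set.Ioo (0:ℝ) 1, ∫ t in II, (G t - G (1-t)) / (1 + t*y) = 0 := by
  rintro y ⟨hy0, hy1⟩
  set x : ℝ := 1/(1+y) with hxdef
  have h1y : (0:ℝ) < 1 + y := by linarith
  have hx : 0 < x := by positivity
  have hW : ∀ t : ℝ, x/((1-t)*x+t) = 1/(1+t*y) := by
    intro t
    have hd : (1-t)*x + t = (1+t*y)/(1+y) := by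
      rw [hxdef]; field_simp; ring
    rw [hd, div_div_eq_mul_div, hxdef, one_div_mul_cancel h1y.ne']
  have i1 : IntegrableOn (fun t => G t * (x/((1-t)*x+t))) II :=
    intMulBdd hGi (measW x) (boundW hx)
  have i2 : IntegrableOn (fun t => G (1-t) * (x/((1-t)*x+t))) II :=
    intMulBdd (integrable_refl hGi) (measW x) (boundW hx)
  have hsub : (∫ t in II, (G t * (x/((1-t)*x+t)) - G (1-t) * (x/((1-t)*x+t)))) =
      (∫ t in II, G t * (x/((1-t)*x+t))) - ∫ t in II, G (1-t) * (x/((1-t)*x+t)) :=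
    integral_sub i1 i2
  rw [h0 x hx, sub_self] at hsub
  have hcong : (∫ t in II, (G t - G (1-t)) / (1 + t*y)) =
      ∫ t in II, (G t * (x/((1-t)*x+t)) - G (1-t) * (x/((1-t)*x+t))) := by
    refine integral_congr_ae (Filter.Eventually.of_forall fun t => ?_)
    show (G t - G (1 - t)) / (1 + t * y) =
      G t * (x / ((1 - t) * x + t)) - G (1 - t) * (x / ((1 - t) * x + t))
    rw [← sub_mul, hW t, mul_one_div]
  rw [hcong, hsub]

section
variable {h : ℝ → ℝ}

lemma momentsVanish (hhi : IntegrableOn h II)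
    (h5 : ∀ y ∈ Set.Ioo (0:ℝ) 1, ∫ t in II, h t / (1 + t*y) = 0) :
    ∀ n : ℕ, ∫ t in II, t^n * h t = 0 := by
  set a : ℕ → ℝ := fun n => ∫ t in II, t^n * h t with ha
  set M : ℝ := ∫ t in II, |h t| with hM
  have hint : ∀ n : ℕ, IntegrableOn (fun t => t^n * h t) II := by
    intro n
    refine Integrable.mono' (hhi.norm) ((measurable_id.pow_const n).aestronglyMeasurable.mul
      hhi.aestronglyMeasurable) ?_
    filter_upwards [ae_restrict_mem measurableSet_Icc] with t ht
    obtain ⟨ht0, ht1⟩ := Set.mem_Icc.mp ht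
    rw [norm_mul, Real.norm_eq_abs, Real.norm_eq_abs, abs_of_nonneg (by positivity : (0:ℝ) ≤ t^n)]
    nlinarith [abs_nonneg (h t), pow_le_one₀ ht0 ht1 (n := n)]
  have haM : ∀ n, |a n| ≤ M := by
    intro n
    have h0 : ‖a n‖ ≤ ∫ t in II, ‖t^n * h t‖ := norm_integral_le_integral_norm _
    rw [Real.norm_eq_abs] at h0
    calc |a n| ≤ ∫ t in II, ‖t^n * h t‖ := h0
      _ ≤ ∫ t in II, |h t| := by
          refine integral_mono_ae (hint n).norm hhi.abs ?_
          filter_upwards [ae_restrict_mem measurableSet_Icc] with t ht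
          obtain ⟨ht0, ht1⟩ := Set.mem_Icc.mp ht
          rw [norm_mul, Real.norm_eq_abs, Real.norm_eq_abs,
            abs_of_nonneg (by positivity : (0:ℝ) ≤ t^n)]
          nlinarith [abs_nonneg (h t), pow_le_one₀ ht0 ht1 (n := n)]
  -- tsum identity
  have htsum : ∀ y ∈ Set.Ioo (0:ℝ) 1, ∑' n : ℕ, (a n * (-1)^n) * y^n = 0 := by
    intro y hy
    obtain ⟨hy0, hy1⟩ := hy
    have hC : (∫⁻ t in II, ‖h t‖₊ ∂volume) ≠ ⊤ := hhi.2.ne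
    have key : ∫ t in II, (∑' n : ℕ, (-y)^n * (t^n * h t)) =
        ∑' n : ℕ, ∫ t in II, (-y)^n * (t^n * h t) := by
      refine integral_tsum (fun n => ((measurable_id.pow_const n).aestronglyMeasurable.mul
        hhi.aestronglyMeasurable).const_mul _) ?_
      have bound : ∀ n : ℕ, (∫⁻ t in II, ‖(-y)^n * (t^n * h t)‖₊ ∂volume) ≤
          ENNReal.ofReal (y^n) * ∫⁻ t in II, ‖h t‖₊ ∂volume := by
        intro n
        rw [← lintegral_const_mul' _ _ ENNReal.ofReal_ne_top]
        refine lintegral_mono_ae ?_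
        filter_upwards [ae_restrict_mem measurableSet_Icc] with t ht
        obtain ⟨ht0, ht1⟩ := Set.mem_Icc.mp ht
        rw [← enorm_eq_nnnorm, ← enorm_eq_nnnorm, ← ofReal_norm, ← ofReal_norm,
          ← ENNReal.ofReal_mul (by positivity)]
        apply ENNReal.ofReal_le_ofReal
        rw [norm_mul, norm_mul, norm_pow, norm_pow, Real.norm_eq_abs, Real.norm_eq_abs,
          Real.norm_eq_abs, abs_neg, abs_of_pos hy0, abs_of_nonneg ht0]
        have h1 : t^n ≤ 1 := pow_le_one₀ ht0 ht1
        nlinarith [abs_nonneg (h t), pow_nonneg ht0 n, pow_nonneg hy0.le n,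
          mul_nonneg (pow_nonneg hy0.le n) (abs_nonneg (h t))]
      refine ne_top_of_le_ne_top (b := (1 - ENNReal.ofReal y)⁻¹ * ∫⁻ t in II, ‖h t‖₊ ∂volume)
        ?_ ?_
      · apply ENNReal.mul_ne_top _ hC
        rw [Ne, ENNReal.inv_eq_top, tsub_eq_zero_iff_le]
        exact fun hle => absurd (lt_of_lt_of_le (ENNReal.ofReal_lt_one.mpr hy1) hle)
          (lt_irrefl _)
      calc ∑' n : ℕ, (∫⁻ t in II, ‖(-y)^n * (t^n * h t)‖₊ ∂volume)
          ≤ ∑' n : ℕ, ENNReal.ofReal (y^n) * ∫⁻ t in II, ‖h t‖₊ ∂volume :=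
            ENNReal.tsum_le_tsum bound
        _ = (∑' n : ℕ, ENNReal.ofReal y ^ n) * ∫⁻ t in II, ‖h t‖₊ ∂volume := by
            rw [ENNReal.tsum_mul_right]
            congr 1
            exact tsum_congr fun n => by rw [ENNReal.ofReal_pow hy0.le]
        _ = (1 - ENNReal.ofReal y)⁻¹ * ∫⁻ t in II, ‖h t‖₊ ∂volume := by
            rw [ENNReal.tsum_geometric]
    -- LHS equals ∫ h/(1+ty)
    have hlhs : ∫ t in II, (∑' n : ℕ, (-y)^n * (t^n * h t)) = ∫ t in II, h t / (1 + t*y) := by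
      refine setIntegral_congr_ae measurableSet_Icc ?_
      filter_upwards with t ht
      obtain ⟨ht0, ht1⟩ := Set.mem_Icc.mp ht
      have hr : ‖(-y) * t‖ < 1 := by
        rw [norm_mul, Real.norm_eq_abs, Real.norm_eq_abs, abs_neg, abs_of_pos hy0,
          abs_of_nonneg ht0]
        nlinarith
      have hgeq : ∑' n : ℕ, ((-y) * t)^n = (1 - (-y) * t)⁻¹ := tsum_geometric_of_norm_lt_one hr
      calc ∑' n : ℕ, (-y)^n * (t^n * h t) = ∑' n : ℕ, h t * ((-y) * t)^n := by
            refine tsum_congr fun n => by rw [mul_pow]; ring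
        _ = h t * (1 - (-y) * t)⁻¹ := by rw [tsum_mul_left, hgeq]
        _ = h t / (1 + t*y) := by rw [div_eq_mul_inv]; ring_nf
    have hrhs : ∀ n : ℕ, ∫ t in II, (-y)^n * (t^n * h t) = (a n * (-1)^n) * y^n := by
      intro n
      rw [integral_const_mul]
      have : (-y)^n = (-1)^n * y^n := by rw [← neg_one_mul, mul_pow]
      rw [this, ha]
      ring
    rw [hlhs, h5 y ⟨hy0, hy1⟩] at key
    exact (tsum_congr hrhs).symm.trans key.symm
  intro n
  have hb := coeff_zero M n (fun k => a k * (-1)^k)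
    (fun k => by rw [abs_mul, abs_pow, abs_neg, abs_one, one_pow, mul_one]; exact haM k)
    htsum
  have hne : ((-1:ℝ))^n ≠ 0 := pow_ne_zero _ (by norm_num)
  rcases mul_eq_zero.mp hb with h' | h'
  · exact h'
  · exact absurd h' hne
end

section
variable {h : ℝ → ℝ}

lemma intBddMul (hhi : IntegrableOn h II) {w : ℝ → ℝ} (hw : Measurable w) {C : ℝ}
    (hC : ∀ t ∈ II, |w t| ≤ C) : IntegrableOn (fun t => w t * h t) II := by
  refine Integrable.mono' (hhi.norm.const_mul C) (hw.aestronglyMeasurable.mul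
    hhi.aestronglyMeasurable) ?_
  filter_upwards [ae_restrict_mem measurableSet_Icc] with t ht
  rw [norm_mul, Real.norm_eq_abs, Real.norm_eq_abs]
  exact mul_le_mul_of_nonneg_right (hC t ht) (abs_nonneg _)

lemma polyInt (hhi : IntegrableOn h II) (hmom : ∀ n : ℕ, ∫ t in II, t^n * h t = 0)
    (p : Polynomial ℝ) : ∫ t in II, p.eval t * h t = 0 := by
  have hint : ∀ (c : ℝ) (n : ℕ), IntegrableOn (fun t => c * t^n * h t) II := by
    intro c n
    refine intBddMul hhi ((measurable_const.mul (measurable_id.pow_const n))) (C := |c|) ?_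
    intro t ht
    obtain ⟨ht0, ht1⟩ := Set.mem_Icc.mp ht
    rw [abs_mul, abs_pow, abs_of_nonneg ht0]
    nlinarith [abs_nonneg c, pow_le_one₀ ht0 ht1 (n := n), pow_nonneg ht0 n]
  have he : ∀ t : ℝ, p.eval t * h t =
      ∑ i ∈ Finset.range (p.natDegree + 1), p.coeff i * t^i * h t := by
    intro t
    rw [Polynomial.eval_eq_sum_range, Finset.sum_mul]
  rw [integral_congr_ae (Filter.Eventually.of_forall he), integral_finset_sum _
    (fun i _ => hint (p.coeff i) i)]
  refine Finset.sum_eq_zero fun i _ => ?_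
  have : ∀ t : ℝ, p.coeff i * t^i * h t = p.coeff i * (t^i * h t) := fun t => by ring
  rw [integral_congr_ae (Filter.Eventually.of_forall this), integral_const_mul, hmom, mul_zero]

lemma contInt (hhi : IntegrableOn h II) (hmom : ∀ n : ℕ, ∫ t in II, t^n * h t = 0)
    {φ : ℝ → ℝ} (hφ : Continuous φ) : ∫ t in II, φ t * h t = 0 := by
  set M : ℝ := ∫ t in II, |h t| with hM
  have hM0 : 0 ≤ M := integral_nonneg fun t => abs_nonneg _
  have hbd : ∀ ψ : ℝ → ℝ, Continuous ψ → IntegrableOn (fun t => ψ t * h t) II := by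
    intro ψ hψ
    obtain ⟨C, hC⟩ := isCompact_Icc.exists_bound_of_continuousOn hψ.continuousOn
    exact intBddMul hhi hψ.measurable (C := C) fun t ht => by
      simpa [Real.norm_eq_abs] using hC t ht
  have key : ∀ ε : ℝ, 0 < ε → |∫ t in II, φ t * h t| ≤ ε := by
    intro ε hε
    have hε' : 0 < ε / (M + 1) := by positivity
    obtain ⟨p, hp⟩ := exists_polynomial_near_of_continuousOn 0 1 φ hφ.continuousOn _ hε'
    have hph : IntegrableOn (fun t => p.eval t * h t) II := hbd _ p.continuous_aeval
    have hsub := integral_sub (hbd φ hφ) hph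
    rw [polyInt hhi hmom p, sub_zero] at hsub
    rw [← hsub]
    have h1 : |∫ t in II, (φ t * h t - p.eval t * h t)| ≤
        ∫ t in II, (ε / (M + 1)) * |h t| := by
      have h2 : ‖∫ t in II, (φ t * h t - p.eval t * h t)‖ ≤
          ∫ t in II, ‖φ t * h t - p.eval t * h t‖ := norm_integral_le_integral_norm _
      rw [Real.norm_eq_abs] at h2
      refine h2.trans (integral_mono_ae ((hbd φ hφ).sub hph).norm (hhi.abs.const_mul _) ?_)
      filter_upwards [ae_restrict_mem measurableSet_Icc] with t ht
      rw [Real.norm_eq_abs, ← sub_mul, abs_mul]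
      exact mul_le_mul_of_nonneg_right (le_of_lt (by rw [abs_sub_comm]; exact hp t ht))
        (abs_nonneg _)
    rw [integral_const_mul] at h1
    calc |∫ t in II, (φ t * h t - p.eval t * h t)| ≤ ε / (M + 1) * M := h1
      _ ≤ ε := by rw [div_mul_eq_mul_div, div_le_iff₀ (by linarith)]; nlinarith
  by_contra hc
  have h0 : 0 < |∫ t in II, φ t * h t| := abs_pos.mpr hc
  linarith [key _ (half_pos h0)]

lemma hZero (hhi : IntegrableOn h II) (hmom : ∀ n : ℕ, ∫ t in II, t^n * h t = 0) :
    ∀ᵐ t ∂(volume.restrict II), h t = 0 := by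
  apply ae_eq_zero_of_integral_contDiff_smul_eq_zero (μ := volume.restrict II)
    hhi.locallyIntegrable
  intro g hg _
  have : ∫ x, g x • h x ∂(volume.restrict II) = ∫ t in II, g t * h t := by
    simp [smul_eq_mul]
  rw [this]
  exact contInt hhi hmom hg.continuous
end


theorem stmt19 (g : Set.Icc (0 : ℝ) 1 → ℝ) (hg0 : ∀ t, 0 ≤ g t)
    (hgi : Integrable g lebIcc) (f : ℝ → ℝ)
    (hf : ∀ x : ℝ, 0 ≤ x → f x = ∫ t, g t * whm (t : ℝ) x ∂lebIcc) :
    (∀ x : ℝ, 0 < x → f x = x * f (1 / x)) ↔ ∀ᵐ t ∂lebIcc, g (theta t) = g t := by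
  set G : ℝ → ℝ := extF g with hGdef
  have hGi : IntegrableOn G II := (integrable_lebIcc g).mp hgi
  have hval : ∀ (t : ℝ) (h : t ∈ II), g ⟨t, h⟩ = G t := by
    intro t h
    simp [hGdef, extF, h]
  have hth : ∀ (t : ℝ) (h : t ∈ II), g (theta ⟨t, h⟩) = G (1 - t) := by
    intro t h
    have h' : (1 - t) ∈ II := by
      obtain ⟨h1, h2⟩ := Set.mem_Icc.mp h
      exact Set.mem_Icc.mpr ⟨by linarith, by linarith⟩
    have : theta ⟨t, h⟩ = ⟨1 - t, h'⟩ := Subtype.ext rfl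
    rw [this, hval (1 - t) h']
  have hwhm : ∀ (t x : ℝ), 0 < x → whm t x = x / ((1 - t) * x + t) := by
    intro t x hx
    rw [whm, if_neg]
    rintro ⟨-, h0⟩
    exact hx.ne' h0
  have hA : ∀ x : ℝ, 0 < x → f x = ∫ t in II, G t * (x / ((1 - t) * x + t)) := by
    intro x hx
    rw [hf x hx.le, integral_lebIcc]
    refine integral_congr_ae (Filter.Eventually.of_forall fun t => ?_)
    show extF (fun t => g t * whm (t : ℝ) x) t = G t * (x / ((1 - t) * x + t))
    by_cases h : t ∈ II
    · simp only [extF, dif_pos h]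
      rw [hval t h, hwhm t x hx]
    · have : G t = 0 := by simp [hGdef, extF, h]
      simp [extF, h, this]
  have hB : ∀ x : ℝ, 0 < x →
      x * f (1 / x) = ∫ t in II, G (1 - t) * (x / ((1 - t) * x + t)) := by
    intro x hx
    have hx' : 0 < 1 / x := by positivity
    rw [hA (1 / x) hx', ← integral_const_mul,
      ← integral_refl (fun t => G (1 - t) * (x / ((1 - t) * x + t)))]
    refine integral_congr_ae (Filter.Eventually.of_forall fun t => ?_)
    show x * (G t * ((1 / x) / ((1 - t) * (1 / x) + t))) =
      G (1 - (1 - t)) * (x / ((1 - (1 - t)) * x + (1 - t)))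
    have h1 : 1 - (1 - t) = t := by ring
    rw [h1]
    have hd : (1 - t) * (1 / x) + t = ((1 - t) + t * x) / x := by
      field_simp
    have he : (1 / x) / ((1 - t) * (1 / x) + t) = 1 / ((1 - t) + t * x) := by
      rw [hd, div_div_eq_mul_div, one_div_mul_cancel hx.ne']
    rw [he]
    have he2 : t * x + (1 - t) = (1 - t) + t * x := by ring
    rw [he2, mul_one_div]
    ring
  constructor
  · intro hfe
    have h0 : ∀ x : ℝ, 0 < x → (∫ t in II, G t * (x / ((1 - t) * x + t))) =
        ∫ t in II, G (1 - t) * (x / ((1 - t) * x + t)) := by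
      intro x hx
      rw [← hA x hx, ← hB x hx]
      exact hfe x hx
    have h5 := step45 hGi h0
    have hhi : IntegrableOn (fun t => G t - G (1 - t)) II :=
      hGi.sub (integrable_refl hGi)
    have hmom := momentsVanish hhi h5
    have hz := hZero hhi hmom
    rw [ae_lebIcc]
    filter_upwards [hz] with t hzt
    intro hmem
    rw [hth t hmem, hval t hmem]
    have : G t - G (1 - t) = 0 := hzt
    linarith
  · intro hae
    have hae' : ∀ᵐ t ∂(volume.restrict II), G (1 - t) = G t := by
      rw [ae_lebIcc] at hae
      filter_upwards [hae, ae_restrict_mem measurableSet_Icc] with t h1 h2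
      have := h1 h2
      rwa [hth t h2, hval t h2] at this
    intro x hx
    rw [hA x hx, hB x hx]
    refine integral_congr_ae ?_
    filter_upwards [hae'] with t ht
    show G t * (x / ((1 - t) * x + t)) = G (1 - t) * (x / ((1 - t) * x + t))
    rw [ht]
end
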